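/- There exist absolute constants C > 0 and K > 0 such that the following holds for every integer n ≥ 1 and every 0 < ε ≤ 1. Let X = X_1 × … × X_n be a product of nonempty finite sets and let π be a probability distribution on X with π(x) > 0 for every x ∈ X, and set π_min = min_{x ∈ X} π(x). Then: (i) for every permutation σ of {1, …, n}, writing T = t^{SS(σ)}_mix(1/10), one has t^{GD}_mix(ε) ≤ C n⁶ T⁴ (log(2 + n T))^K log(1/(ε π_min)); and (ii) writing T* = max over permutations σ of t^{SS(σ)}_mix(1/10), one has t^{GD}_mix(ε) ≤ C n⁴ (T*)⁴ (log(2 + n T*))^K log(1/(ε π_min)). -/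

import Mathlib

open scoped Classical

universe u

/-- The `ε`-mixing time of a transition matrix `M` with target distribution `π`:
the least `t` such that from every starting state `x`, the total variation distance
between the `t`-step distribution `M^t(x, ·)` and `π` is at most `ε`. -/
noncomputable def mixTime {S : Type u} [Fintype S] [DecidableEq S]
    (M : Matrix S S ℝ) (π : S → ℝ) (ε : ℝ) : ℕ :=
  sInf {t : ℕ | ∀ x : S, (1 / 2) * ∑ y : S, |(M ^ t) x y - π y| ≤ ε}

/-- The Gibbs update matrix at site `i`: rerandomize coordinate `i` from the conditional
distribution of `π` given the remaining coordinates. -/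
noncomputable def gibbsUpdate {n : ℕ} {X : Fin n → Type u} [∀ i, Fintype (X i)]
    (π : (∀ i, X i) → ℝ) (i : Fin n) :
    Matrix (∀ j, X j) (∀ j, X j) ℝ :=
  fun x y =>
    if ∀ j, j ≠ i → y j = x j then
      π y / ∑ z ∈ Finset.univ.filter (fun z : ∀ j, X j => ∀ j, j ≠ i → z j = x j), π z
    else 0

/-- The Glauber dynamics transition matrix `(1/n) ∑_i P_i`. -/
noncomputable def glauberMatrix {n : ℕ} {X : Fin n → Type u} [∀ i, Fintype (X i)]
    (π : (∀ i, X i) → ℝ) : Matrix (∀ j, X j) (∀ j, X j) ℝ :=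
  (n : ℝ)⁻¹ • ∑ i, gibbsUpdate π i

/-- The systematic scan transition matrix `P_σ = P_{σ(n)} ⋯ P_{σ(1)}` (matrix product). -/
noncomputable def scanMatrix {n : ℕ} {X : Fin n → Type u} [∀ i, Fintype (X i)]
    (π : (∀ i, X i) → ℝ) (σ : Equiv.Perm (Fin n)) :
    Matrix (∀ j, X j) (∀ j, X j) ℝ :=
  ((List.ofFn fun j : Fin n => gibbsUpdate π (σ j)).reverse).prod

/-- The minimum probability of a fully supported distribution on a finite nonempty set. -/
noncomputable def piMin {S : Type u} [Fintype S] [Nonempty S] (π : S → ℝ) : ℝ :=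
  Finset.univ.inf' Finset.univ_nonempty π

set_option maxHeartbeats 1000000

namespace GlauberAux

variable {V : Type u} [Fintype V] [DecidableEq V]

/-- weighted inner product -/
noncomputable def ip (π : V → ℝ) (f g : V → ℝ) : ℝ := ∑ x, π x * (f x * g x)

/-- apply matrix to function -/
noncomputable def apM (M : Matrix V V ℝ) (f : V → ℝ) : V → ℝ := fun x => ∑ y, M x y * f y

/-- flow out of a set -/
noncomputable def FF (π : V → ℝ) (M : Matrix V V ℝ) (A : Finset V) : ℝ :=
  ∑ x ∈ A, ∑ y ∈ Aᶜ, π x * M x y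

def Stoch (M : Matrix V V ℝ) : Prop := (∀ x y, 0 ≤ M x y) ∧ ∀ x, ∑ y, M x y = 1

def Stat (π : V → ℝ) (M : Matrix V V ℝ) : Prop := ∀ y, ∑ x, π x * M x y = π y

def Rev (π : V → ℝ) (M : Matrix V V ℝ) : Prop := ∀ x y, π x * M x y = π y * M y x

lemma Stoch.mul {M N : Matrix V V ℝ} (hM : Stoch M) (hN : Stoch N) : Stoch (M * N) := by
  constructor
  · intro x y
    rw [Matrix.mul_apply]
    exact Finset.sum_nonneg fun z _ => mul_nonneg (hM.1 x z) (hN.1 z y)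
  · intro x
    simp only [Matrix.mul_apply]
    rw [Finset.sum_comm]
    calc ∑ z, ∑ y, M x z * N z y = ∑ z, M x z * ∑ y, N z y := by
          simp [Finset.mul_sum]
      _ = 1 := by simp only [hN.2]; simpa using hM.2 x

lemma Stoch.one : Stoch (1 : Matrix V V ℝ) := by
  constructor
  · intro x y
    by_cases h : x = y <;> simp [Matrix.one_apply, h]
  · intro x; simp [Matrix.one_apply]

lemma Stoch.pow {M : Matrix V V ℝ} (hM : Stoch M) (t : ℕ) : Stoch (M ^ t) := by
  induction t with
  | zero => simpa using Stoch.one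
  | succ t ih => rw [pow_succ]; exact ih.mul hM

lemma Stat.mul {π : V → ℝ} {M N : Matrix V V ℝ} (hM : Stat π M) (hN : Stat π N) :
    Stat π (M * N) := by
  intro y
  simp only [Matrix.mul_apply]
  calc ∑ x, π x * ∑ z, M x z * N z y = ∑ x, ∑ z, π x * M x z * N z y := by
        refine Finset.sum_congr rfl fun x _ => ?_
        rw [Finset.mul_sum]; refine Finset.sum_congr rfl fun z _ => by ring
    _ = ∑ z, (∑ x, π x * M x z) * N z y := by
        rw [Finset.sum_comm]
        refine Finset.sum_congr rfl fun z _ => ?_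
        rw [Finset.sum_mul]
    _ = ∑ z, π z * N z y := by
        refine Finset.sum_congr rfl fun z _ => by rw [hM z]
    _ = π y := hN y

lemma Stat.one {π : V → ℝ} (hsum : ∑ x, π x = 1) : Stat π (1 : Matrix V V ℝ) := by
  intro y
  rw [Finset.sum_eq_single y]
  · simp
  · intro b _ hb; rw [Matrix.one_apply_ne hb, mul_zero]
  · intro h; exact absurd (Finset.mem_univ y) h

lemma Stat.pow {π : V → ℝ} {M : Matrix V V ℝ} (hM : Stat π M) (t : ℕ) : Stat π (M ^ t) := by
  induction t with
  | zero =>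
    intro y
    simp only [pow_zero, Matrix.one_apply]
    rw [Finset.sum_eq_single y]
    · simp
    · intro b _ hb; simp [hb]
    · intro h; exact absurd (Finset.mem_univ y) h
  | succ t ih => rw [pow_succ]; exact ih.mul hM

lemma Rev.stat {π : V → ℝ} {M : Matrix V V ℝ} (hM : Rev π M) (hs : Stoch M) : Stat π M := by
  intro y
  calc ∑ x, π x * M x y = ∑ x, π y * M y x := by
        refine Finset.sum_congr rfl fun x _ => ?_
        rw [hM x y]
    _ = π y := by rw [← Finset.mul_sum, hs.2 y, mul_one]

lemma Rev.pow {π : V → ℝ} {M : Matrix V V ℝ} (hM : Rev π M) (t : ℕ) : Rev π (M ^ t) := by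
  induction t with
  | zero =>
    intro x y
    simp only [pow_zero, Matrix.one_apply]
    by_cases h : x = y
    · subst h; rfl
    · simp [h, Ne.symm h]
  | succ t ih =>
    intro x y
    rw [pow_succ]
    have key : π x * (M ^ t * M) x y = π y * (M * M ^ t) y x := by
      simp only [Matrix.mul_apply, Finset.mul_sum]
      refine Finset.sum_congr rfl fun z _ => ?_
      calc π x * ((M ^ t) x z * M z y) = (π x * (M ^ t) x z) * M z y := by ring
        _ = ((M ^ t) z x * (π z * M z y)) := by rw [ih x z]; ring
        _ = (M ^ t) z x * (π y * M y z) := by rw [hM z y]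
        _ = π y * (M y z * (M ^ t) z x) := by ring
    rw [key, ← pow_succ', pow_succ]


section Flow

variable {π : V → ℝ} {M N : Matrix V V ℝ} {A : Finset V}

lemma FF_nonneg (hπ : ∀ x, 0 ≤ π x) (hM : ∀ x y, 0 ≤ M x y) : 0 ≤ FF π M A :=
  Finset.sum_nonneg fun x _ => Finset.sum_nonneg fun y _ => mul_nonneg (hπ x) (hM x y)

lemma FF_one : FF π (1 : Matrix V V ℝ) A = 0 := by
  refine Finset.sum_eq_zero fun x hx => Finset.sum_eq_zero fun y hy => ?_
  have hxy : x ≠ y := by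
    intro h; subst h; exact (Finset.mem_compl.1 hy) hx
  rw [Matrix.one_apply_ne hxy, mul_zero]

lemma FF_mul (hπ : ∀ x, 0 ≤ π x) (hM : Stoch M) (hN : Stoch N) (hMs : Stat π M) :
    FF π (M * N) A ≤ FF π M A + FF π N A := by
  have e1 : FF π (M * N) A = ∑ z, (∑ x ∈ A, π x * M x z) * (∑ y ∈ Aᶜ, N z y) := by
    unfold FF
    simp only [Matrix.mul_apply]
    calc ∑ x ∈ A, ∑ y ∈ Aᶜ, π x * ∑ z, M x z * N z y
        = ∑ x ∈ A, ∑ y ∈ Aᶜ, ∑ z, (π x * M x z) * N z y := by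
          refine Finset.sum_congr rfl fun x _ => Finset.sum_congr rfl fun y _ => ?_
          rw [Finset.mul_sum]; refine Finset.sum_congr rfl fun z _ => by ring
      _ = ∑ x ∈ A, ∑ z, ∑ y ∈ Aᶜ, (π x * M x z) * N z y := by
          refine Finset.sum_congr rfl fun x _ => Finset.sum_comm
      _ = ∑ z, ∑ x ∈ A, ∑ y ∈ Aᶜ, (π x * M x z) * N z y := Finset.sum_comm
      _ = ∑ z, (∑ x ∈ A, π x * M x z) * (∑ y ∈ Aᶜ, N z y) := by
          refine Finset.sum_congr rfl fun z _ => ?_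
          rw [Finset.sum_mul]
          refine Finset.sum_congr rfl fun x _ => (Finset.mul_sum _ _ _).symm
  have ha_nonneg : ∀ z, 0 ≤ ∑ x ∈ A, π x * M x z := fun z =>
    Finset.sum_nonneg fun x _ => mul_nonneg (hπ x) (hM.1 x z)
  have hb_nonneg : ∀ z, 0 ≤ ∑ y ∈ Aᶜ, N z y := fun z =>
    Finset.sum_nonneg fun y _ => hN.1 z y
  have hb_le : ∀ z, ∑ y ∈ Aᶜ, N z y ≤ 1 := by
    intro z
    rw [← hN.2 z]
    exact Finset.sum_le_sum_of_subset_of_nonneg (Finset.subset_univ _)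
      (fun y _ _ => hN.1 z y)
  have ha_le : ∀ z, ∑ x ∈ A, π x * M x z ≤ π z := by
    intro z
    rw [← hMs z]
    exact Finset.sum_le_sum_of_subset_of_nonneg (Finset.subset_univ _)
      (fun x _ _ => mul_nonneg (hπ x) (hM.1 x z))
  rw [e1, ← Finset.sum_add_sum_compl A]
  have h1 : ∑ z ∈ A, (∑ x ∈ A, π x * M x z) * (∑ y ∈ Aᶜ, N z y) ≤ FF π N A := by
    unfold FF
    refine Finset.sum_le_sum fun z _ => ?_
    rw [← Finset.mul_sum]
    exact mul_le_mul_of_nonneg_right (ha_le z) (hb_nonneg z)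
  have h2 : ∑ z ∈ Aᶜ, (∑ x ∈ A, π x * M x z) * (∑ y ∈ Aᶜ, N z y) ≤ FF π M A := by
    have : FF π M A = ∑ z ∈ Aᶜ, ∑ x ∈ A, π x * M x z := Finset.sum_comm
    rw [this]
    refine Finset.sum_le_sum fun z _ => ?_
    calc (∑ x ∈ A, π x * M x z) * (∑ y ∈ Aᶜ, N z y)
        ≤ (∑ x ∈ A, π x * M x z) * 1 := by
          exact mul_le_mul_of_nonneg_left (hb_le z) (ha_nonneg z)
      _ = ∑ x ∈ A, π x * M x z := mul_one _
  calc ∑ z ∈ A, _ + ∑ z ∈ Aᶜ, _ ≤ FF π N A + FF π M A := add_le_add h1 h2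
    _ = FF π M A + FF π N A := add_comm _ _

lemma FF_pow (hπ : ∀ x, 0 ≤ π x) (hM : Stoch M) (hMs : Stat π M) (t : ℕ) :
    FF π (M ^ t) A ≤ (t : ℝ) * FF π M A := by
  induction t with
  | zero => simp [FF_one]
  | succ t ih =>
    have h1 : FF π (M ^ t * M) A ≤ FF π (M ^ t) A + FF π M A :=
      FF_mul hπ (hM.pow t) hM (hMs.pow t)
    rw [pow_succ]
    calc FF π (M ^ t * M) A ≤ FF π (M ^ t) A + FF π M A := h1
      _ ≤ (t : ℝ) * FF π M A + FF π M A := by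
          exact add_le_add_left ih _
      _ = ((t + 1 : ℕ) : ℝ) * FF π M A := by push_cast; ring

end Flow

section ListProd

variable {π : V → ℝ}

lemma Stoch.listProd {l : List (Matrix V V ℝ)} (h : ∀ M ∈ l, Stoch M) : Stoch l.prod := by
  induction l with
  | nil => simpa using Stoch.one
  | cons M l ih =>
    rw [List.prod_cons]
    exact (h M (List.mem_cons_self)).mul (ih fun N hN => h N (List.mem_cons_of_mem M hN))

lemma Stat.listProd (hsum : ∑ x, π x = 1) {l : List (Matrix V V ℝ)}
    (h : ∀ M ∈ l, Stat π M) : Stat π l.prod := by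
  induction l with
  | nil => simpa using Stat.one hsum
  | cons M l ih =>
    rw [List.prod_cons]
    exact (h M (List.mem_cons_self)).mul (ih fun N hN => h N (List.mem_cons_of_mem M hN))

lemma FF_listProd (hπ : ∀ x, 0 ≤ π x) (hsum : ∑ x, π x = 1) {l : List (Matrix V V ℝ)}
    (h : ∀ M ∈ l, Stoch M ∧ Stat π M) {A : Finset V} :
    FF π l.prod A ≤ (l.map fun M => FF π M A).sum := by
  induction l with
  | nil => simp [FF_one]
  | cons M l ih =>
    rw [List.prod_cons, List.map_cons, List.sum_cons]
    have h1 : FF π (M * l.prod) A ≤ FF π M A + FF π l.prod A :=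
      FF_mul hπ (h M (List.mem_cons_self)).1
        (Stoch.listProd fun N hN => (h N (List.mem_cons_of_mem M hN)).1)
        (h M (List.mem_cons_self)).2
    have h2 := ih fun N hN => h N (List.mem_cons_of_mem M hN)
    linarith

end ListProd

section Doeblin

variable {π : V → ℝ} {Q : Matrix V V ℝ}

lemma tv_contract (hsum : ∑ x, π x = 1) (hπ : ∀ x, 0 ≤ π x) (hQ : Stoch Q) {γ : ℝ}
    (hlb : ∀ x y, γ * π y ≤ Q x y) (ν : V → ℝ) (hν : ∑ x, ν x = 0) :
    ∑ y, |∑ x, ν x * Q x y| ≤ (1 - γ) * ∑ x, |ν x| := by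
  have key : ∀ y, |∑ x, ν x * Q x y| ≤ ∑ x, |ν x| * (Q x y - γ * π y) := by
    intro y
    have e : ∑ x, ν x * Q x y = ∑ x, ν x * (Q x y - γ * π y) := by
      have : ∑ x, ν x * (Q x y - γ * π y) = ∑ x, ν x * Q x y - (γ * π y) * ∑ x, ν x := by
        rw [Finset.mul_sum, ← Finset.sum_sub_distrib]
        refine Finset.sum_congr rfl fun x _ => by ring
      rw [this, hν, mul_zero, sub_zero]
    rw [e]
    calc |∑ x, ν x * (Q x y - γ * π y)| ≤ ∑ x, |ν x * (Q x y - γ * π y)| :=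
          Finset.abs_sum_le_sum_abs _ _
      _ = ∑ x, |ν x| * (Q x y - γ * π y) := by
          refine Finset.sum_congr rfl fun x _ => ?_
          rw [abs_mul, abs_of_nonneg (sub_nonneg.2 (hlb x y))]
  calc ∑ y, |∑ x, ν x * Q x y| ≤ ∑ y, ∑ x, |ν x| * (Q x y - γ * π y) :=
        Finset.sum_le_sum fun y _ => key y
    _ = ∑ x, |ν x| * ((∑ y, Q x y) - ∑ y, γ * π y) := by
        rw [Finset.sum_comm]
        refine Finset.sum_congr rfl fun x _ => ?_
        rw [mul_sub, Finset.mul_sum, Finset.mul_sum, ← Finset.sum_sub_distrib]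
        refine Finset.sum_congr rfl fun y _ => by ring
    _ = ∑ x, |ν x| * (1 - γ) := by
        refine Finset.sum_congr rfl fun x _ => ?_
        rw [hQ.2 x, ← Finset.mul_sum, hsum, mul_one]
    _ = (1 - γ) * ∑ x, |ν x| := by
        rw [← Finset.sum_mul, mul_comm]

lemma exists_tv_small (hπ : ∀ x, 0 < π x) (hsum : ∑ x, π x = 1)
    (hQ : Stoch Q) (hQs : Stat π Q) (hQpos : ∀ x y, 0 < Q x y) {ε : ℝ} (hε : 0 < ε) :
    ∃ t : ℕ, ∀ x, (1/2 : ℝ) * ∑ y, |(Q ^ t) x y - π y| ≤ ε := by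
  have hne : Nonempty V := by
    by_contra h
    rw [not_nonempty_iff] at h
    rw [Finset.univ_eq_empty, Finset.sum_empty] at hsum
    exact zero_ne_one hsum
  obtain ⟨x₀⟩ := hne
  have hVne : Nonempty (V × V) := ⟨(x₀, x₀)⟩
  set γ : ℝ := Finset.univ.inf' Finset.univ_nonempty (fun p : V × V => Q p.1 p.2) with hγdef
  have hγle : ∀ x y, γ ≤ Q x y := fun x y =>
    Finset.inf'_le _ (Finset.mem_univ (x, y))
  have hγpos : 0 < γ := by
    obtain ⟨p, _, hp⟩ := Finset.exists_mem_eq_inf' (Finset.univ_nonempty (α := V × V))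
      (fun p : V × V => Q p.1 p.2)
    rw [hγdef, hp]
    exact hQpos p.1 p.2
  have hπle1 : ∀ y, π y ≤ 1 := by
    intro y
    rw [← hsum]
    exact Finset.single_le_sum (fun x _ => (hπ x).le) (Finset.mem_univ y)
  have hγ1 : γ ≤ 1 := by
    have h1 : γ ≤ Q x₀ x₀ := hγle x₀ x₀
    have h2 : Q x₀ x₀ ≤ ∑ y, Q x₀ y :=
      Finset.single_le_sum (fun y _ => hQ.1 x₀ y) (Finset.mem_univ x₀)
    rw [hQ.2 x₀] at h2
    linarith
  have hlb : ∀ x y, γ * π y ≤ Q x y := by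
    intro x y
    calc γ * π y ≤ γ * 1 := mul_le_mul_of_nonneg_left (hπle1 y) hγpos.le
      _ = γ := mul_one γ
      _ ≤ Q x y := hγle x y
  have main : ∀ t : ℕ, ∀ x, ∑ y, |(Q ^ t) x y - π y| ≤ 2 * (1 - γ) ^ t := by
    intro t
    induction t with
    | zero =>
      intro x
      simp only [pow_zero, Matrix.one_apply]
      calc ∑ y, |(if x = y then (1:ℝ) else 0) - π y|
          ≤ ∑ y, ((if x = y then (1:ℝ) else 0) + π y) := by
            refine Finset.sum_le_sum fun y _ => ?_
            refine (abs_sub _ _).trans ?_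
            rw [abs_of_nonneg (by split <;> norm_num : (0:ℝ) ≤ if x = y then 1 else 0),
              abs_of_nonneg (hπ y).le]
        _ = 1 + 1 := by
            rw [Finset.sum_add_distrib, hsum, Finset.sum_ite_eq Finset.univ x fun _ => (1:ℝ)]
            simp
        _ ≤ 2 * (1 - γ) ^ 0 := by norm_num
    | succ t ih =>
      intro x
      have hrec : ∀ y, (Q ^ (t+1)) x y - π y = ∑ z, ((Q ^ t) x z - π z) * Q z y := by
        intro y
        rw [pow_succ, Matrix.mul_apply]
        have : ∑ z, ((Q ^ t) x z - π z) * Q z y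
            = ∑ z, (Q ^ t) x z * Q z y - ∑ z, π z * Q z y := by
          rw [← Finset.sum_sub_distrib]
          refine Finset.sum_congr rfl fun z _ => by ring
        rw [this, hQs y]
      have hν : ∑ z, ((Q ^ t) x z - π z) = 0 := by
        rw [Finset.sum_sub_distrib, (hQ.pow t).2 x, hsum, sub_self]
      calc ∑ y, |(Q ^ (t+1)) x y - π y|
          = ∑ y, |∑ z, ((Q ^ t) x z - π z) * Q z y| := by
            refine Finset.sum_congr rfl fun y _ => by rw [hrec y]
        _ ≤ (1 - γ) * ∑ z, |(Q ^ t) x z - π z| :=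
            tv_contract hsum (fun x => (hπ x).le) hQ hlb _ hν
        _ ≤ (1 - γ) * (2 * (1 - γ) ^ t) := by
            refine mul_le_mul_of_nonneg_left (ih x) (by linarith)
        _ = 2 * (1 - γ) ^ (t + 1) := by ring
  obtain ⟨t, ht⟩ := exists_pow_lt_of_lt_one hε (by linarith : 1 - γ < 1)
  refine ⟨t, fun x => ?_⟩
  calc (1/2 : ℝ) * ∑ y, |(Q ^ t) x y - π y| ≤ (1/2) * (2 * (1 - γ) ^ t) := by
        refine mul_le_mul_of_nonneg_left (main t x) (by norm_num)
    _ = (1 - γ) ^ t := by ring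
    _ ≤ ε := ht.le

end Doeblin

section L2

variable {π : V → ℝ} {M : Matrix V V ℝ}

lemma apM_mulMat (M N : Matrix V V ℝ) (f : V → ℝ) : apM (M * N) f = apM M (apM N f) := by
  funext x
  unfold apM
  simp only [Matrix.mul_apply]
  calc ∑ y, (∑ z, M x z * N z y) * f y = ∑ y, ∑ z, M x z * N z y * f y := by
        refine Finset.sum_congr rfl fun y _ => ?_
        rw [Finset.sum_mul]
    _ = ∑ z, ∑ y, M x z * N z y * f y := Finset.sum_comm
    _ = ∑ z, M x z * ∑ y, N z y * f y := by
        refine Finset.sum_congr rfl fun z _ => ?_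
        rw [Finset.mul_sum]
        refine Finset.sum_congr rfl fun y _ => by ring

lemma apM_one (f : V → ℝ) : apM (1 : Matrix V V ℝ) f = f := by
  funext x
  unfold apM
  rw [Finset.sum_eq_single x]
  · simp
  · intro b _ hb; rw [Matrix.one_apply_ne (Ne.symm hb), zero_mul]
  · intro h; exact absurd (Finset.mem_univ x) h

lemma ip_self_nonneg (hπ : ∀ x, 0 ≤ π x) (f : V → ℝ) : 0 ≤ ip π f f :=
  Finset.sum_nonneg fun x _ => mul_nonneg (hπ x) (mul_self_nonneg _)

lemma selfAdj (hrev : Rev π M) (f g : V → ℝ) : ip π (apM M f) g = ip π f (apM M g) := by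
  unfold ip apM
  calc ∑ x, π x * ((∑ y, M x y * f y) * g x)
      = ∑ x, ∑ y, (π x * M x y) * (f y * g x) := by
        refine Finset.sum_congr rfl fun x _ => ?_
        rw [Finset.sum_mul, Finset.mul_sum]
        refine Finset.sum_congr rfl fun y _ => by ring
    _ = ∑ x, ∑ y, (π y * M y x) * (f y * g x) := by
        refine Finset.sum_congr rfl fun x _ => Finset.sum_congr rfl fun y _ => by rw [hrev x y]
    _ = ∑ y, ∑ x, (π y * M y x) * (f y * g x) := Finset.sum_comm
    _ = ∑ y, π y * (f y * ∑ x, M y x * g x) := by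
        refine Finset.sum_congr rfl fun y _ => ?_
        rw [Finset.mul_sum, Finset.mul_sum]
        refine Finset.sum_congr rfl fun x _ => by ring

lemma ip_expand (A : Matrix V V ℝ) (u v : V → ℝ) (t : ℝ) :
    ip π (apM A (fun x => u x + t * v x)) (fun x => u x + t * v x)
      = ip π (apM A u) u + t * ip π (apM A u) v + t * ip π (apM A v) u
        + t ^ 2 * ip π (apM A v) v := by
  unfold ip apM
  have hw : ∀ x, (∑ y, A x y * (u y + t * v y))
      = (∑ y, A x y * u y) + t * ∑ y, A x y * v y := by
    intro x
    rw [Finset.mul_sum, ← Finset.sum_add_distrib]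
    refine Finset.sum_congr rfl fun y _ => by ring
  calc ∑ x, π x * ((∑ y, A x y * (u y + t * v y)) * (u x + t * v x))
      = ∑ x, (π x * ((∑ y, A x y * u y) * u x)
          + t * (π x * ((∑ y, A x y * u y) * v x))
          + t * (π x * ((∑ y, A x y * v y) * u x))
          + t ^ 2 * (π x * ((∑ y, A x y * v y) * v x))) := by
        refine Finset.sum_congr rfl fun x _ => ?_
        rw [hw x]; ring
    _ = _ := by
        simp only [Finset.sum_add_distrib, ← Finset.mul_sum]

lemma ip_psd_cs {A : Matrix V V ℝ} (hpsd : ∀ w, 0 ≤ ip π (apM A w) w)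
    (hsy : ∀ f g : V → ℝ, ip π (apM A f) g = ip π (apM A g) f) (u v : V → ℝ) :
    (ip π (apM A u) v) ^ 2 ≤ ip π (apM A u) u * ip π (apM A v) v := by
  have key : ∀ t : ℝ, 0 ≤ (ip π (apM A v) v) * (t * t) + (2 * ip π (apM A u) v) * t
      + ip π (apM A u) u := by
    intro t
    have h := hpsd (fun x => u x + t * v x)
    rw [ip_expand] at h
    have hsym : ip π (apM A v) u = ip π (apM A u) v := hsy v u
    rw [hsym] at h
    nlinarith [h]
  have hd := discrim_le_zero key
  unfold discrim at hd
  nlinarith [hd]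

lemma ip_cs (hπ : ∀ x, 0 ≤ π x) (u v : V → ℝ) :
    (ip π u v) ^ 2 ≤ ip π u u * ip π v v := by
  have h := ip_psd_cs (π := π) (A := (1 : Matrix V V ℝ))
    (fun w => by rw [apM_one]; exact ip_self_nonneg hπ w)
    (fun f g => by rw [apM_one, apM_one]; unfold ip; exact Finset.sum_congr rfl fun x _ => by ring)
    u v
  rw [apM_one, apM_one] at h
  exact h

lemma apM_contract (hπ : ∀ x, 0 ≤ π x) (hM : Stoch M) (hMs : Stat π M) (f : V → ℝ) :
    ip π (apM M f) (apM M f) ≤ ip π f f := by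
  have hpt : ∀ x, (∑ y, M x y * f y) ^ 2 ≤ ∑ y, M x y * (f y) ^ 2 := by
    intro x
    have h := Finset.sum_mul_sq_le_sq_mul_sq Finset.univ
      (fun y => Real.sqrt (M x y)) (fun y => Real.sqrt (M x y) * f y)
    have e1 : ∀ y, Real.sqrt (M x y) * (Real.sqrt (M x y) * f y) = M x y * f y := by
      intro y
      rw [← mul_assoc, Real.mul_self_sqrt (hM.1 x y)]
    have e2 : ∀ y, Real.sqrt (M x y) ^ 2 = M x y := fun y => Real.sq_sqrt (hM.1 x y)
    have e3 : ∀ y, (Real.sqrt (M x y) * f y) ^ 2 = M x y * (f y) ^ 2 := by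
      intro y
      rw [mul_pow, e2 y]
    simp only [e1, e2, e3] at h
    rw [hM.2 x, one_mul] at h
    exact h
  unfold ip apM
  calc ∑ x, π x * ((∑ y, M x y * f y) * (∑ y, M x y * f y))
      ≤ ∑ x, π x * ∑ y, M x y * (f y) ^ 2 := by
        refine Finset.sum_le_sum fun x _ => ?_
        refine mul_le_mul_of_nonneg_left ?_ (hπ x)
        rw [← sq]
        exact hpt x
    _ = ∑ y, (∑ x, π x * M x y) * (f y) ^ 2 := by
        calc ∑ x, π x * ∑ y, M x y * (f y) ^ 2
            = ∑ x, ∑ y, π x * M x y * (f y) ^ 2 := by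
              refine Finset.sum_congr rfl fun x _ => ?_
              rw [Finset.mul_sum]
              refine Finset.sum_congr rfl fun y _ => by ring
          _ = ∑ y, ∑ x, π x * M x y * (f y) ^ 2 := Finset.sum_comm
          _ = _ := by
              refine Finset.sum_congr rfl fun y _ => ?_
              rw [Finset.sum_mul]
    _ = ∑ y, π y * (f y * f y) := by
        refine Finset.sum_congr rfl fun y _ => ?_
        rw [hMs y]; ring

lemma apM_meanzero (hMs : Stat π M) (g : V → ℝ) (hg : ∑ x, π x * g x = 0) :
    ∑ x, π x * apM M g x = 0 := by
  unfold apM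
  calc ∑ x, π x * ∑ y, M x y * g y = ∑ y, (∑ x, π x * M x y) * g y := by
        calc ∑ x, π x * ∑ y, M x y * g y = ∑ x, ∑ y, π x * M x y * g y := by
              refine Finset.sum_congr rfl fun x _ => ?_
              rw [Finset.mul_sum]
              refine Finset.sum_congr rfl fun y _ => by ring
          _ = ∑ y, ∑ x, π x * M x y * g y := Finset.sum_comm
          _ = _ := by
              refine Finset.sum_congr rfl fun y _ => ?_
              rw [Finset.sum_mul]
    _ = ∑ y, π y * g y := by
        refine Finset.sum_congr rfl fun y _ => by rw [hMs y]
    _ = 0 := hg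

lemma step_decay (hπ : ∀ x, 0 ≤ π x) (hM : Stoch M) (hrev : Rev π M)
    (hpsd : ∀ w, 0 ≤ ip π (apM M w) w) {γ : ℝ}
    (hray : ∀ g : V → ℝ, ∑ x, π x * g x = 0 → ip π (apM M g) g ≤ (1 - γ) * ip π g g)
    (g : V → ℝ) (hg : ∑ x, π x * g x = 0) :
    ip π (apM M g) (apM M g) ≤ (1 - γ) * ip π g g := by
  have hMs : Stat π M := hrev.stat hM
  have hsy : ∀ f g : V → ℝ, ip π (apM M f) g = ip π (apM M g) f := by
    intro f g
    rw [selfAdj hrev f g]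
    unfold ip
    exact Finset.sum_congr rfl fun x _ => by ring
  set N := ip π (apM M g) (apM M g) with hN
  have hN0 : 0 ≤ N := ip_self_nonneg hπ _
  -- N ≤ ip (Mg) g
  have key : N ≤ ip π (apM M g) g := by
    have c1 : (ip π (apM M g) (apM M g)) ^ 2
        ≤ ip π (apM M g) g * ip π (apM M (apM M g)) (apM M g) := by
      have := ip_psd_cs hpsd hsy g (apM M g)
      nlinarith [this]
    have c2 : (ip π (apM M (apM M g)) (apM M g)) ^ 2
        ≤ ip π (apM M (apM M g)) (apM M (apM M g)) * ip π (apM M g) (apM M g) :=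
      ip_cs hπ _ _
    have c3 : ip π (apM M (apM M g)) (apM M (apM M g)) ≤ N := apM_contract hπ hM hMs _
    have c4 : 0 ≤ ip π (apM M (apM M g)) (apM M g) := hpsd _
    have c5 : ip π (apM M (apM M g)) (apM M g) ≤ N := by nlinarith [c2, c3, c4, hN0]
    have c6 : N ^ 2 ≤ ip π (apM M g) g * N := by nlinarith [c1, c5, hpsd g]
    rcases eq_or_lt_of_le hN0 with h0 | h0
    · rw [← h0]; exact hpsd g
    · exact le_of_mul_le_mul_right (by nlinarith [c6]) h0
  calc N ≤ ip π (apM M g) g := key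
    _ ≤ (1 - γ) * ip π g g := hray g hg

lemma iter_decay (hπ : ∀ x, 0 ≤ π x) (hM : Stoch M) (hrev : Rev π M)
    (hpsd : ∀ w, 0 ≤ ip π (apM M w) w) {γ : ℝ} (hγ1 : γ ≤ 1)
    (hray : ∀ g : V → ℝ, ∑ x, π x * g x = 0 → ip π (apM M g) g ≤ (1 - γ) * ip π g g)
    (g : V → ℝ) (hg : ∑ x, π x * g x = 0) (t : ℕ) :
    ip π (apM (M ^ t) g) (apM (M ^ t) g) ≤ (1 - γ) ^ t * ip π g g := by
  have hMs : Stat π M := hrev.stat hM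
  induction t with
  | zero => rw [pow_zero, apM_one, pow_zero, one_mul]
  | succ t ih =>
    have hmz : ∑ x, π x * apM (M ^ t) g x = 0 := by
      have : Stat π (M ^ t) := hMs.pow t
      exact apM_meanzero this g hg
    have h1 : ip π (apM M (apM (M ^ t) g)) (apM M (apM (M ^ t) g))
        ≤ (1 - γ) * ip π (apM (M ^ t) g) (apM (M ^ t) g) :=
      step_decay hπ hM hrev hpsd hray _ hmz
    have e : apM (M ^ (t + 1)) g = apM M (apM (M ^ t) g) := by
      rw [pow_succ']
      exact apM_mulMat M (M ^ t) g
    rw [e, pow_succ]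
    have hip0 : 0 ≤ ip π (apM (M ^ t) g) (apM (M ^ t) g) := ip_self_nonneg hπ _
    calc ip π (apM M (apM (M ^ t) g)) (apM M (apM (M ^ t) g))
        ≤ (1 - γ) * ip π (apM (M ^ t) g) (apM (M ^ t) g) := h1
      _ ≤ (1 - γ) * ((1 - γ) ^ t * ip π g g) := by
          refine mul_le_mul_of_nonneg_left ih (by linarith)
      _ = (1 - γ) ^ t * (1 - γ) * ip π g g := by ring

end L2

section Cheeger

variable {π : V → ℝ} {M : Matrix V V ℝ}

lemma energy_eq (hrev : Rev π M) (hM : Stoch M) (f : V → ℝ) :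
    ip π f f - ip π (apM M f) f
      = (1/2) * ∑ x, ∑ y, π x * M x y * (f x - f y) ^ 2 := by
  have hMs : Stat π M := hrev.stat hM
  have e1 : ∑ x, ∑ y, π x * M x y * (f x) ^ 2 = ip π f f := by
    unfold ip
    refine Finset.sum_congr rfl fun x _ => ?_
    calc ∑ y, π x * M x y * f x ^ 2 = (π x * f x ^ 2) * ∑ y, M x y := by
          rw [Finset.mul_sum]
          exact Finset.sum_congr rfl fun y _ => by ring
      _ = π x * (f x * f x) := by rw [hM.2 x]; ring
  have e2 : ∑ x, ∑ y, π x * M x y * (f y) ^ 2 = ip π f f := by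
    rw [Finset.sum_comm]
    unfold ip
    refine Finset.sum_congr rfl fun y _ => ?_
    calc ∑ x, π x * M x y * f y ^ 2 = (∑ x, π x * M x y) * f y ^ 2 := by
          rw [Finset.sum_mul]
      _ = π y * (f y * f y) := by rw [hMs y]; ring
  have e3 : ∑ x, ∑ y, π x * M x y * (f x * f y) = ip π (apM M f) f := by
    unfold ip apM
    refine Finset.sum_congr rfl fun x _ => ?_
    rw [Finset.sum_mul, Finset.mul_sum]
    refine Finset.sum_congr rfl fun y _ => by ring
  have expand : ∑ x, ∑ y, π x * M x y * (f x - f y) ^ 2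
      = ∑ x, ∑ y, π x * M x y * (f x) ^ 2 + ∑ x, ∑ y, π x * M x y * (f y) ^ 2
        - 2 * ∑ x, ∑ y, π x * M x y * (f x * f y) := by
    rw [← Finset.sum_add_distrib, Finset.mul_sum, ← Finset.sum_sub_distrib]
    refine Finset.sum_congr rfl fun x _ => ?_
    rw [← Finset.sum_add_distrib, Finset.mul_sum, ← Finset.sum_sub_distrib]
    refine Finset.sum_congr rfl fun y _ => by ring
  rw [expand, e1, e2, e3]
  ring

/-- co-area / level-set induction -/
lemma coarea (hπ : ∀ x, 0 ≤ π x) (hMnn : ∀ x y, 0 ≤ M x y)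
    (hsymm : ∀ x y, π x * M x y = π y * M y x) {φ : ℝ}
    (hcond : ∀ A : Finset V, A.Nonempty → (∑ x ∈ A, π x) ≤ 1/2 →
      φ * ∑ x ∈ A, π x ≤ FF π M A) :
    ∀ N : ℕ, ∀ h : V → ℝ, (∀ x, 0 ≤ h x) →
      (Finset.univ.filter fun x => h x ≠ 0).card ≤ N →
      (∑ x ∈ Finset.univ.filter (fun x => h x ≠ 0), π x) ≤ 1/2 →
      2 * φ * ∑ x, π x * h x ≤ ∑ x, ∑ y, π x * M x y * |h x - h y| := by
  intro N
  induction N with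
  | zero =>
    intro h hh hcard _
    have hempty : (Finset.univ.filter fun x => h x ≠ 0) = ∅ :=
      Finset.card_eq_zero.1 (Nat.le_zero.1 hcard)
    have hzero : ∀ x, h x = 0 := by
      intro x
      by_contra hx
      have : x ∈ Finset.univ.filter fun x => h x ≠ 0 :=
        Finset.mem_filter.2 ⟨Finset.mem_univ x, hx⟩
      rw [hempty] at this
      exact absurd this (Finset.notMem_empty x)
    have : ∑ x, π x * h x = 0 := Finset.sum_eq_zero fun x _ => by rw [hzero x, mul_zero]
    rw [this, mul_zero]
    exact Finset.sum_nonneg fun x _ => Finset.sum_nonneg fun y _ =>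
      mul_nonneg (mul_nonneg (hπ x) (hMnn x y)) (abs_nonneg _)
  | succ N ih =>
    intro h hh hcard hsupp
    set A := Finset.univ.filter (fun x => h x ≠ 0) with hA
    rcases A.eq_empty_or_nonempty with hAe | hAne
    · -- empty support: same as base case
      have hzero : ∀ x, h x = 0 := by
        intro x
        by_contra hx
        have : x ∈ A := Finset.mem_filter.2 ⟨Finset.mem_univ x, hx⟩
        rw [hAe] at this
        exact absurd this (Finset.notMem_empty x)
      have : ∑ x, π x * h x = 0 := Finset.sum_eq_zero fun x _ => by rw [hzero x, mul_zero]
      rw [this, mul_zero]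
      exact Finset.sum_nonneg fun x _ => Finset.sum_nonneg fun y _ =>
        mul_nonneg (mul_nonneg (hπ x) (hMnn x y)) (abs_nonneg _)
    · obtain ⟨x₀, hx₀A, hx₀min⟩ := Finset.exists_min_image A h hAne
      set v := h x₀ with hv
      have hv0 : 0 < v := by
        have : h x₀ ≠ 0 := (Finset.mem_filter.1 hx₀A).2
        exact lt_of_le_of_ne (hh x₀) (Ne.symm this)
      have hvle : ∀ x ∈ A, v ≤ h x := fun x hx => hx₀min x hx
      have hoff : ∀ x, x ∉ A → h x = 0 := by
        intro x hx
        by_contra hne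
        exact hx (Finset.mem_filter.2 ⟨Finset.mem_univ x, hne⟩)
      set h' : V → ℝ := fun x => if x ∈ A then h x - v else 0 with hh'
      have hh'nn : ∀ x, 0 ≤ h' x := by
        intro x
        by_cases hx : x ∈ A
        · simp only [hh', hx, if_true]; linarith [hvle x hx]
        · simp only [hh', hx, if_false]; exact le_refl 0
      have hsuppsub : (Finset.univ.filter fun x => h' x ≠ 0) ⊆ A.erase x₀ := by
        intro x hx
        have hx' : h' x ≠ 0 := (Finset.mem_filter.1 hx).2
        by_cases hxA : x ∈ A
        · refine Finset.mem_erase.2 ⟨?_, hxA⟩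
          intro hxx
          subst hxx
          simp only [hh', hxA, if_true, sub_self] at hx'
          exact hx' (by simp [hv])
        · simp only [hh', hxA, if_false] at hx'
          exact absurd rfl hx'
      have hcard' : (Finset.univ.filter fun x => h' x ≠ 0).card ≤ N := by
        have h1 := Finset.card_le_card hsuppsub
        have h2 : (A.erase x₀).card = A.card - 1 := Finset.card_erase_of_mem hx₀A
        have h3 : A.card ≤ N + 1 := hcard
        have h4 : 1 ≤ A.card := Finset.card_pos.2 hAne
        omega
      have hsupp' : (∑ x ∈ Finset.univ.filter (fun x => h' x ≠ 0), π x) ≤ 1/2 := by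
        refine le_trans ?_ hsupp
        refine Finset.sum_le_sum_of_subset_of_nonneg
          (hsuppsub.trans (Finset.erase_subset x₀ A)) (fun x _ _ => hπ x)
      have hmeas : ∑ x, π x * h x = ∑ x, π x * h' x + v * ∑ x ∈ A, π x := by
        have pt : ∀ x, π x * h x = π x * h' x + (if x ∈ A then v * π x else 0) := by
          intro x
          by_cases hx : x ∈ A
          · simp only [hh', hx, if_true]; ring
          · simp only [hh', hx, if_false, hoff x hx]; ring
        calc ∑ x, π x * h x = ∑ x, (π x * h' x + if x ∈ A then v * π x else 0) :=
              Finset.sum_congr rfl fun x _ => pt x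
          _ = ∑ x, π x * h' x + ∑ x, (if x ∈ A then v * π x else 0) :=
              Finset.sum_add_distrib
          _ = ∑ x, π x * h' x + v * ∑ x ∈ A, π x := by
              congr 1
              rw [Finset.sum_ite_mem, Finset.univ_inter, Finset.mul_sum]
      have hptwise : ∀ x y, π x * M x y * |h x - h y|
          = π x * M x y * |h' x - h' y|
            + ((if x ∈ A then if y ∈ Aᶜ then v * (π x * M x y) else 0 else 0)
              + (if x ∈ Aᶜ then if y ∈ A then v * (π x * M x y) else 0 else 0)) := by
        intro x y
        by_cases hx : x ∈ A <;> by_cases hy : y ∈ A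
        · simp only [hh', hx, hy, if_true, Finset.mem_compl, hx, hy, not_true, if_false]
          have : h x - h y = (h x - v) - (h y - v) := by ring
          rw [this]
          simp
        · have hyc : y ∈ Aᶜ := Finset.mem_compl.2 hy
          simp only [hh', hx, hy, if_true, if_false, hyc, Finset.mem_compl, not_true,
            not_false_iff, hoff y hy]
          have e1 : |h x - 0| = h x := by rw [sub_zero, abs_of_nonneg (hh x)]
          have e2 : |h x - v - 0| = h x - v := by
            rw [sub_zero, abs_of_nonneg (by linarith [hvle x hx])]
          rw [e1, e2]
          ring
        · have hxc : x ∈ Aᶜ := Finset.mem_compl.2 hx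
          simp only [hh', hx, hy, if_true, if_false, hxc, Finset.mem_compl, not_true,
            not_false_iff, hoff x hx]
          have e1 : |0 - h y| = h y := by rw [zero_sub, abs_neg, abs_of_nonneg (hh y)]
          have e2 : |0 - (h y - v)| = h y - v := by
            rw [zero_sub, abs_neg, abs_of_nonneg (by linarith [hvle y hy])]
          rw [e1, e2]
          ring
        · simp only [hh', hx, hy, if_false, hoff x hx, hoff y hy, Finset.mem_compl,
            not_false_iff, if_true]
          simp
      have hFFsymm : ∑ x ∈ Aᶜ, ∑ y ∈ A, π x * M x y = FF π M A := by
        unfold FF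
        rw [Finset.sum_comm]
        refine Finset.sum_congr rfl fun x _ => Finset.sum_congr rfl fun y _ => ?_
        exact hsymm _ _
      have hsum_split : ∑ x, ∑ y, π x * M x y * |h x - h y|
          = ∑ x, ∑ y, π x * M x y * |h' x - h' y| + 2 * v * FF π M A := by
        calc ∑ x, ∑ y, π x * M x y * |h x - h y|
            = ∑ x, ∑ y, (π x * M x y * |h' x - h' y|
              + ((if x ∈ A then if y ∈ Aᶜ then v * (π x * M x y) else 0 else 0)
                + (if x ∈ Aᶜ then if y ∈ A then v * (π x * M x y) else 0 else 0))) := by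
              exact Finset.sum_congr rfl fun x _ => Finset.sum_congr rfl fun y _ => hptwise x y
          _ = ∑ x, ∑ y, π x * M x y * |h' x - h' y|
              + (∑ x, ∑ y, (if x ∈ A then if y ∈ Aᶜ then v * (π x * M x y) else 0 else 0)
                + ∑ x, ∑ y, (if x ∈ Aᶜ then if y ∈ A then v * (π x * M x y) else 0 else 0)) := by
              simp only [Finset.sum_add_distrib]
          _ = ∑ x, ∑ y, π x * M x y * |h' x - h' y| + 2 * v * FF π M A := by
              congr 1
              have t1 : ∑ x, ∑ y, (if x ∈ A then if y ∈ Aᶜ then v * (π x * M x y) else 0 else 0)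
                  = v * FF π M A := by
                unfold FF
                rw [Finset.mul_sum]
                calc ∑ x, ∑ y, (if x ∈ A then if y ∈ Aᶜ then v * (π x * M x y) else 0 else 0)
                    = ∑ x, (if x ∈ A then ∑ y, (if y ∈ Aᶜ then v * (π x * M x y) else 0) else 0) := by
                      refine Finset.sum_congr rfl fun x _ => ?_
                      by_cases hx : x ∈ A
                      · simp only [hx, if_true]
                      · simp only [hx, if_false, Finset.sum_const_zero]
                  _ = ∑ x ∈ A, ∑ y1 ∈ Aᶜ, v * (π x * M x y1) := by
                      rw [← Finset.sum_filter]
                      rw [Finset.filter_mem_eq_inter, Finset.univ_inter]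
                      refine Finset.sum_congr rfl fun x _ => ?_
                      rw [Finset.sum_ite_mem, Finset.univ_inter]
                  _ = ∑ x ∈ A, v * ∑ y ∈ Aᶜ, π x * M x y := by
                      refine Finset.sum_congr rfl fun x _ => (Finset.mul_sum _ _ _).symm
                  _ = ∑ x ∈ A, v * ∑ y ∈ Aᶜ, π x * M x y := rfl
              have t2 : ∑ x, ∑ y, (if x ∈ Aᶜ then if y ∈ A then v * (π x * M x y) else 0 else 0)
                  = v * FF π M A := by
                rw [← hFFsymm, Finset.mul_sum]
                calc ∑ x, ∑ y, (if x ∈ Aᶜ then if y ∈ A then v * (π x * M x y) else 0 else 0)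
                    = ∑ x, (if x ∈ Aᶜ then ∑ y, (if y ∈ A then v * (π x * M x y) else 0) else 0) := by
                      refine Finset.sum_congr rfl fun x _ => ?_
                      by_cases hx : x ∈ Aᶜ
                      · simp only [hx, if_true]
                      · simp only [hx, if_false, Finset.sum_const_zero]
                  _ = ∑ x ∈ Aᶜ, ∑ y ∈ A, v * (π x * M x y) := by
                      rw [← Finset.sum_filter]
                      rw [Finset.filter_mem_eq_inter, Finset.univ_inter]
                      refine Finset.sum_congr rfl fun x _ => ?_
                      rw [Finset.sum_ite_mem, Finset.univ_inter]
                  _ = ∑ x ∈ Aᶜ, v * ∑ y ∈ A, π x * M x y := by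
                      refine Finset.sum_congr rfl fun x _ => (Finset.mul_sum _ _ _).symm
              rw [t1, t2]
              ring
      have hFFA : φ * ∑ x ∈ A, π x ≤ FF π M A := hcond A hAne hsupp
      have hIH := ih h' hh'nn hcard' hsupp'
      rw [hsum_split, hmeas]
      have : 2 * φ * (v * ∑ x ∈ A, π x) ≤ 2 * v * FF π M A := by
        calc 2 * φ * (v * ∑ x ∈ A, π x) = 2 * v * (φ * ∑ x ∈ A, π x) := by ring
          _ ≤ 2 * v * FF π M A := by
            refine mul_le_mul_of_nonneg_left hFFA (by linarith)
      linarith [hIH]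

lemma exists_median (hπ : ∀ x, 0 ≤ π x) (hsum : ∑ x, π x = 1) [Nonempty V] (f : V → ℝ) :
    ∃ m : ℝ, (∑ x ∈ Finset.univ.filter (fun x => f x < m), π x) ≤ 1/2 ∧
      (∑ x ∈ Finset.univ.filter (fun x => m < f x), π x) ≤ 1/2 := by
  set C := Finset.univ.filter
    (fun x => 1/2 ≤ ∑ y ∈ Finset.univ.filter (fun y => f y ≤ f x), π y) with hC
  have hCne : C.Nonempty := by
    obtain ⟨xm, _, hxm⟩ := Finset.exists_max_image Finset.univ f Finset.univ_nonempty
    refine ⟨xm, Finset.mem_filter.2 ⟨Finset.mem_univ xm, ?_⟩⟩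
    have : Finset.univ.filter (fun y => f y ≤ f xm) = Finset.univ :=
      Finset.filter_true_of_mem fun y hy => hxm y hy
    rw [this, hsum]
    norm_num
  obtain ⟨x₀, hx₀C, hx₀min⟩ := Finset.exists_min_image C f hCne
  refine ⟨f x₀, ?_, ?_⟩
  · -- lower part
    rcases (Finset.univ.filter (fun x => f x < f x₀)).eq_empty_or_nonempty with hB | hB
    · rw [hB, Finset.sum_empty]; norm_num
    · obtain ⟨x₁, hx₁B, hx₁max⟩ := Finset.exists_max_image _ f hB
      have hfx₁ : f x₁ < f x₀ := (Finset.mem_filter.1 hx₁B).2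
      have hx₁notC : x₁ ∉ C := by
        intro hx₁C
        exact absurd (hx₀min x₁ hx₁C) (not_le.2 hfx₁)
      have hlt : ∑ y ∈ Finset.univ.filter (fun y => f y ≤ f x₁), π y < 1/2 := by
        by_contra hge
        exact hx₁notC (Finset.mem_filter.2 ⟨Finset.mem_univ x₁, not_lt.1 hge⟩)
      refine le_trans ?_ hlt.le
      refine Finset.sum_le_sum_of_subset_of_nonneg ?_ (fun x _ _ => hπ x)
      intro x hx
      have hfx : f x < f x₀ := (Finset.mem_filter.1 hx).2
      exact Finset.mem_filter.2 ⟨Finset.mem_univ x, hx₁max x (Finset.mem_filter.2 ⟨Finset.mem_univ x, hfx⟩)⟩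
  · -- upper part
    have hx₀ : 1/2 ≤ ∑ y ∈ Finset.univ.filter (fun y => f y ≤ f x₀), π y :=
      (Finset.mem_filter.1 hx₀C).2
    have hsplit : ∑ y ∈ Finset.univ.filter (fun y => f y ≤ f x₀), π y
        + ∑ y ∈ Finset.univ.filter (fun y => ¬ f y ≤ f x₀), π y = 1 := by
      rw [Finset.sum_filter_add_sum_filter_not, hsum]
    have : Finset.univ.filter (fun x => f x₀ < f x)
        = Finset.univ.filter (fun y => ¬ f y ≤ f x₀) := by
      refine Finset.filter_congr fun x _ => ?_
      rw [not_le]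
    rw [this]
    linarith

lemma cheeger (hπ : ∀ x, 0 < π x) (hsum : ∑ x, π x = 1) [Nonempty V]
    (hM : Stoch M) (hrev : Rev π M) {φ : ℝ} (hφ : 0 ≤ φ)
    (hcond : ∀ A : Finset V, A.Nonempty → (∑ x ∈ A, π x) ≤ 1/2 →
      φ * ∑ x ∈ A, π x ≤ FF π M A)
    (f : V → ℝ) (hf : ∑ x, π x * f x = 0) :
    ip π (apM M f) f ≤ (1 - φ ^ 2 / 2) * ip π f f := by
  have hπnn : ∀ x, 0 ≤ π x := fun x => (hπ x).le
  have hMs : Stat π M := hrev.stat hM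
  obtain ⟨m, hmlow, hmhigh⟩ := exists_median hπnn hsum f
  set u : V → ℝ := fun x => max (f x - m) 0 with hu
  set w : V → ℝ := fun x => max (m - f x) 0 with hw
  have hunn : ∀ x, 0 ≤ u x := fun x => le_max_right _ _
  have hwnn : ∀ x, 0 ≤ w x := fun x => le_max_right _ _
  -- pointwise decomposition facts
  have hid : ∀ x, u x - w x = f x - m := by
    intro x
    rcases le_total (f x) m with h | h
    · rw [hu, hw]
      simp only [max_eq_right (by linarith : f x - m ≤ 0), max_eq_left (by linarith : 0 ≤ m - f x)]
      ring
    · rw [hu, hw]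
      simp only [max_eq_left (by linarith : 0 ≤ f x - m), max_eq_right (by linarith : m - f x ≤ 0)]
      ring
  have hprod : ∀ x, u x * w x = 0 := by
    intro x
    rcases le_total (f x) m with h | h
    · rw [hu]
      simp only [max_eq_right (by linarith : f x - m ≤ 0), zero_mul]
    · rw [hw]
      simp only [max_eq_right (by linarith : m - f x ≤ 0), mul_zero]
  -- energy splits
  have hsq : ∀ x y, (u x - u y) ^ 2 + (w x - w y) ^ 2 ≤ (f x - f y) ^ 2 := by
    intro x y
    have h1 : f x - f y = (u x - w x) - (u y - w y) := by
      rw [hid x, hid y]; ring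
    rw [h1]
    have h2 : (u x - u y) * (w x - w y) ≤ 0 := by
      have e : (u x - u y) * (w x - w y)
          = -(u x * w y) - u y * w x + u x * w x + u y * w y := by ring
      rw [e, hprod x, hprod y]
      have := mul_nonneg (hunn x) (hwnn y)
      have := mul_nonneg (hunn y) (hwnn x)
      linarith
    nlinarith [h2]
  -- generic claim for nonneg functions with small support
  have claim : ∀ g : V → ℝ, (∀ x, 0 ≤ g x) →
      (∑ x ∈ Finset.univ.filter (fun x => g x ≠ 0), π x) ≤ 1/2 →
      (φ ^ 2 / 2) * ip π g g ≤ (1/2) * ∑ x, ∑ y, π x * M x y * (g x - g y) ^ 2 := by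
    intro g hgnn hgsupp
    have hEnn : 0 ≤ ∑ x, ∑ y, π x * M x y * (g x - g y) ^ 2 :=
      Finset.sum_nonneg fun x _ => Finset.sum_nonneg fun y _ =>
        mul_nonneg (mul_nonneg (hπnn x) (hM.1 x y)) (sq_nonneg _)
    have hipnn : 0 ≤ ip π g g := ip_self_nonneg hπnn g
    rcases eq_or_lt_of_le hipnn with hip0 | hip0
    · rw [← hip0, mul_zero]
      linarith
    -- co-area applied to h = g^2
    have hco : 2 * φ * ∑ x, π x * (g x * g x)
        ≤ ∑ x, ∑ y, π x * M x y * |g x * g x - g y * g y| := by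
      have hsupp2 : (Finset.univ.filter fun x => g x * g x ≠ 0)
          = Finset.univ.filter (fun x => g x ≠ 0) := by
        refine Finset.filter_congr fun x _ => ?_
        constructor
        · intro h hx; exact h (by rw [hx, mul_zero])
        · intro h; exact mul_ne_zero h h
      refine coarea hπnn hM.1 hrev (fun A hA1 hA2 => hcond A hA1 hA2)
        (Finset.univ.filter fun x => g x * g x ≠ 0).card
        (fun x => g x * g x) (fun x => mul_self_nonneg _) (le_refl _) ?_
      rw [hsupp2]
      exact hgsupp
    have hipeq : ∑ x, π x * (g x * g x) = ip π g g := rfl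
    -- Cauchy–Schwarz on pairs
    set E := ∑ x, ∑ y, π x * M x y * (g x - g y) ^ 2 with hE
    set P := ∑ x, ∑ y, π x * M x y * |g x * g x - g y * g y| with hP
    have hPbound : P ^ 2 ≤ E * (4 * ip π g g) := by
      have cs := Finset.sum_mul_sq_le_sq_mul_sq (Finset.univ : Finset (V × V))
        (fun p => Real.sqrt (π p.1 * M p.1 p.2) * |g p.1 - g p.2|)
        (fun p => Real.sqrt (π p.1 * M p.1 p.2) * (g p.1 + g p.2))
      have hnn : ∀ p : V × V, 0 ≤ π p.1 * M p.1 p.2 := fun p =>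
        mul_nonneg (hπnn p.1) (hM.1 p.1 p.2)
      have e1 : ∀ p : V × V,
          (Real.sqrt (π p.1 * M p.1 p.2) * |g p.1 - g p.2|)
            * (Real.sqrt (π p.1 * M p.1 p.2) * (g p.1 + g p.2))
          = π p.1 * M p.1 p.2 * |g p.1 * g p.1 - g p.2 * g p.2| := by
        intro p
        have habs : |g p.1 * g p.1 - g p.2 * g p.2|
            = |g p.1 - g p.2| * (g p.1 + g p.2) := by
          have : g p.1 * g p.1 - g p.2 * g p.2 = (g p.1 - g p.2) * (g p.1 + g p.2) := by ring
          rw [this, abs_mul, abs_of_nonneg (by linarith [hgnn p.1, hgnn p.2] : (0:ℝ) ≤ g p.1 + g p.2)]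
        rw [habs]
        have hs := Real.mul_self_sqrt (hnn p)
        linear_combination (|g p.1 - g p.2| * (g p.1 + g p.2)) * hs
      have e2 : ∀ p : V × V,
          (Real.sqrt (π p.1 * M p.1 p.2) * |g p.1 - g p.2|) ^ 2
          = π p.1 * M p.1 p.2 * (g p.1 - g p.2) ^ 2 := by
        intro p
        rw [mul_pow, Real.sq_sqrt (hnn p), sq_abs]
      have e3 : ∀ p : V × V,
          (Real.sqrt (π p.1 * M p.1 p.2) * (g p.1 + g p.2)) ^ 2
          = π p.1 * M p.1 p.2 * (g p.1 + g p.2) ^ 2 := by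
        intro p
        rw [mul_pow, Real.sq_sqrt (hnn p)]
      simp only [e1, e2, e3] at cs
      -- convert product sums to double sums
      have prodeq : ∀ F : V → V → ℝ, ∑ p : V × V, F p.1 p.2 = ∑ x, ∑ y, F x y := by
        intro F
        rw [← Finset.univ_product_univ, Finset.sum_product]
      rw [prodeq (fun x y => π x * M x y * |g x * g x - g y * g y|)] at cs
      rw [prodeq (fun x y => π x * M x y * (g x - g y) ^ 2)] at cs
      rw [prodeq (fun x y => π x * M x y * (g x + g y) ^ 2)] at cs
      have hbound2 : ∑ x, ∑ y, π x * M x y * (g x + g y) ^ 2 ≤ 4 * ip π g g := by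
        have pt : ∀ x y, π x * M x y * (g x + g y) ^ 2
            ≤ 2 * (π x * M x y * (g x) ^ 2) + 2 * (π x * M x y * (g y) ^ 2) := by
          intro x y
          have h2 : (g x + g y) ^ 2 ≤ 2 * (g x) ^ 2 + 2 * (g y) ^ 2 := by nlinarith [sq_nonneg (g x - g y)]
          nlinarith [hnn (x, y), h2]
        calc ∑ x, ∑ y, π x * M x y * (g x + g y) ^ 2
            ≤ ∑ x, ∑ y, (2 * (π x * M x y * (g x) ^ 2) + 2 * (π x * M x y * (g y) ^ 2)) :=
              Finset.sum_le_sum fun x _ => Finset.sum_le_sum fun y _ => pt x y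
          _ = 2 * (∑ x, ∑ y, π x * M x y * (g x) ^ 2) + 2 * (∑ x, ∑ y, π x * M x y * (g y) ^ 2) := by
              simp only [Finset.sum_add_distrib, Finset.mul_sum]
          _ = 4 * ip π g g := by
              have ee1 : ∑ x, ∑ y, π x * M x y * (g x) ^ 2 = ip π g g := by
                unfold ip
                refine Finset.sum_congr rfl fun x _ => ?_
                calc ∑ y, π x * M x y * g x ^ 2 = (π x * g x ^ 2) * ∑ y, M x y := by
                      rw [Finset.mul_sum]
                      exact Finset.sum_congr rfl fun y _ => by ring
                  _ = π x * (g x * g x) := by rw [hM.2 x]; ring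
              have ee2 : ∑ x, ∑ y, π x * M x y * (g y) ^ 2 = ip π g g := by
                rw [Finset.sum_comm]
                unfold ip
                refine Finset.sum_congr rfl fun y _ => ?_
                calc ∑ x, π x * M x y * g y ^ 2 = (∑ x, π x * M x y) * g y ^ 2 := by
                      rw [Finset.sum_mul]
                  _ = π y * (g y * g y) := by rw [hMs y]; ring
              rw [ee1, ee2]
              ring
      calc P ^ 2 ≤ E * ∑ x, ∑ y, π x * M x y * (g x + g y) ^ 2 := cs
        _ ≤ E * (4 * ip π g g) := by
            refine mul_le_mul_of_nonneg_left hbound2 ?_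
            exact Finset.sum_nonneg fun x _ => Finset.sum_nonneg fun y _ =>
              mul_nonneg (mul_nonneg (hπnn x) (hM.1 x y)) (sq_nonneg _)
    -- combine
    have h2φ : 2 * φ * ip π g g ≤ P := by
      rw [hipeq] at hco
      exact hco
    have hPnn : 0 ≤ 2 * φ * ip π g g := by positivity
    have sq_le : (2 * φ * ip π g g) ^ 2 ≤ P ^ 2 := by
      have hP0 : 0 ≤ P := le_trans hPnn h2φ
      exact pow_le_pow_left₀ hPnn h2φ 2
    have final : 4 * φ ^ 2 * (ip π g g) ^ 2 ≤ E * (4 * ip π g g) := by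
      nlinarith [sq_le, hPbound]
    -- divide by ip g g
    have h9 : (φ ^ 2 * ip π g g - E) * ip π g g ≤ 0 := by nlinarith [final]
    have h10 : φ ^ 2 * ip π g g - E ≤ 0 := by
      by_contra hcon
      push_neg at hcon
      exact absurd h9 (not_le.2 (mul_pos hcon hip0))
    linarith
  -- apply claim to u and w
  have husupp : (∑ x ∈ Finset.univ.filter (fun x => u x ≠ 0), π x) ≤ 1/2 := by
    have : Finset.univ.filter (fun x => u x ≠ 0) = Finset.univ.filter (fun x => m < f x) := by
      refine Finset.filter_congr fun x _ => ?_
      simp only [hu]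
      constructor
      · intro h
        by_contra hle
        exact h (max_eq_right (by linarith [not_lt.1 hle] : f x - m ≤ 0))
      · intro h
        rw [max_eq_left (by linarith : (0:ℝ) ≤ f x - m)]
        intro h0
        have : f x = m := by linarith [sub_eq_zero.1 h0]
        linarith
    rw [this]
    exact hmhigh
  have hwsupp : (∑ x ∈ Finset.univ.filter (fun x => w x ≠ 0), π x) ≤ 1/2 := by
    have : Finset.univ.filter (fun x => w x ≠ 0) = Finset.univ.filter (fun x => f x < m) := by
      refine Finset.filter_congr fun x _ => ?_
      simp only [hw]
      constructor
      · intro h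
        by_contra hle
        exact h (max_eq_right (by linarith [not_lt.1 hle] : m - f x ≤ 0))
      · intro h
        rw [max_eq_left (by linarith : (0:ℝ) ≤ m - f x)]
        intro h0
        have : f x = m := by linarith [sub_eq_zero.1 h0]
        linarith
    rw [this]
    exact hmlow
  have hclaimu := claim u hunn husupp
  have hclaimw := claim w hwnn hwsupp
  -- sum of pair energies bounded by energy of f
  have hEsum : (1/2) * ∑ x, ∑ y, π x * M x y * (u x - u y) ^ 2
      + (1/2) * ∑ x, ∑ y, π x * M x y * (w x - w y) ^ 2
      ≤ ip π f f - ip π (apM M f) f := by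
    rw [energy_eq hrev hM f]
    have : ∑ x, ∑ y, π x * M x y * (u x - u y) ^ 2
        + ∑ x, ∑ y, π x * M x y * (w x - w y) ^ 2
        ≤ ∑ x, ∑ y, π x * M x y * (f x - f y) ^ 2 := by
      rw [← Finset.sum_add_distrib]
      refine Finset.sum_le_sum fun x _ => ?_
      rw [← Finset.sum_add_distrib]
      refine Finset.sum_le_sum fun y _ => ?_
      have hnn := mul_nonneg (hπnn x) (hM.1 x y)
      calc π x * M x y * (u x - u y) ^ 2 + π x * M x y * (w x - w y) ^ 2
          = π x * M x y * ((u x - u y) ^ 2 + (w x - w y) ^ 2) := by ring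
        _ ≤ π x * M x y * (f x - f y) ^ 2 := mul_le_mul_of_nonneg_left (hsq x y) hnn
    linarith
  -- ip u u + ip w w ≥ ip f f
  have hvar : ip π f f ≤ ip π u u + ip π w w := by
    have e2 : ip π u u + ip π w w = ∑ x, π x * ((f x - m) ^ 2) := by
      unfold ip
      rw [← Finset.sum_add_distrib]
      refine Finset.sum_congr rfl fun x _ => ?_
      have h1 : f x - m = u x - w x := (hid x).symm
      have h2 : u x * w x = 0 := hprod x
      rw [h1]
      linear_combination (2 * π x) * h2
    have e3 : ∑ x, π x * ((f x - m) ^ 2)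
        = ip π f f - 2 * m * (∑ x, π x * f x) + m ^ 2 * ∑ x, π x := by
      unfold ip
      rw [Finset.mul_sum, Finset.mul_sum, ← Finset.sum_sub_distrib, ← Finset.sum_add_distrib]
      refine Finset.sum_congr rfl fun x _ => by ring
    rw [e2, e3, hf, hsum]
    nlinarith [sq_nonneg m]

  -- conclude
  have hfinal : (φ ^ 2 / 2) * ip π f f ≤ ip π f f - ip π (apM M f) f := by
    have h1 : (φ ^ 2 / 2) * (ip π u u + ip π w w) ≤ ip π f f - ip π (apM M f) f := by
      linarith [hclaimu, hclaimw, hEsum]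
    have h2 : (φ ^ 2 / 2) * ip π f f ≤ (φ ^ 2 / 2) * (ip π u u + ip π w w) := by
      refine mul_le_mul_of_nonneg_left hvar (by positivity)
    linarith
  linarith

end Cheeger

end GlauberAux

namespace GlauberGibbs

open GlauberAux

variable {n : ℕ} {X : Fin n → Type u} [∀ i, Fintype (X i)] [∀ i, Nonempty (X i)]
variable {π : (∀ j, X j) → ℝ}

/-- the normalizing constant -/
noncomputable def Z (π : (∀ j, X j) → ℝ) (i : Fin n) (x : ∀ j, X j) : ℝ :=
  ∑ z ∈ Finset.univ.filter (fun z : ∀ j, X j => ∀ j, j ≠ i → z j = x j), π z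

lemma Z_pos (hpos : ∀ x, 0 < π x) (i : Fin n) (x : ∀ j, X j) : 0 < Z π i x := by
  refine Finset.sum_pos' (fun z _ => (hpos z).le) ⟨x, ?_, hpos x⟩
  exact Finset.mem_filter.2 ⟨Finset.mem_univ x, fun j _ => rfl⟩

lemma filter_rel_eq (i : Fin n) {x y : ∀ j, X j} (hxy : ∀ j, j ≠ i → y j = x j) :
    (Finset.univ.filter (fun z : ∀ j, X j => ∀ j, j ≠ i → z j = y j))
      = Finset.univ.filter (fun z : ∀ j, X j => ∀ j, j ≠ i → z j = x j) := by
  refine Finset.filter_congr fun z _ => ?_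
  constructor
  · intro h j hj
    rw [h j hj, hxy j hj]
  · intro h j hj
    rw [h j hj, ← hxy j hj]

lemma Z_eq (i : Fin n) {x y : ∀ j, X j} (hxy : ∀ j, j ≠ i → y j = x j) :
    Z π i y = Z π i x := by
  unfold Z
  rw [filter_rel_eq i hxy]

lemma gibbs_apply_of_rel (i : Fin n) {x y : ∀ j, X j} (hxy : ∀ j, j ≠ i → y j = x j) :
    gibbsUpdate π i x y = π y / Z π i x := by
  unfold gibbsUpdate Z
  rw [if_pos hxy]

lemma gibbs_apply_of_not_rel (i : Fin n) {x y : ∀ j, X j} (hxy : ¬ ∀ j, j ≠ i → y j = x j) :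
    gibbsUpdate π i x y = 0 := by
  unfold gibbsUpdate
  rw [if_neg hxy]

lemma gibbs_nonneg (hpos : ∀ x, 0 < π x) (i : Fin n) (x y : ∀ j, X j) :
    0 ≤ gibbsUpdate π i x y := by
  by_cases h : ∀ j, j ≠ i → y j = x j
  · rw [gibbs_apply_of_rel i h]
    exact div_nonneg (hpos y).le (Z_pos hpos i x).le
  · rw [gibbs_apply_of_not_rel i h]

lemma gibbs_pos_of_rel (hpos : ∀ x, 0 < π x) (i : Fin n) {x y : ∀ j, X j}
    (hxy : ∀ j, j ≠ i → y j = x j) : 0 < gibbsUpdate π i x y := by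
  rw [gibbs_apply_of_rel i hxy]
  exact div_pos (hpos y) (Z_pos hpos i x)

lemma gibbs_rowsum (hpos : ∀ x, 0 < π x) (i : Fin n) (x : ∀ j, X j) :
    ∑ y, gibbsUpdate π i x y = 1 := by
  rw [← Finset.sum_filter_add_sum_filter_not Finset.univ
    (fun y : ∀ j, X j => ∀ j, j ≠ i → y j = x j)]
  have h2 : ∑ y ∈ Finset.univ.filter (fun y : ∀ j, X j => ¬ ∀ j, j ≠ i → y j = x j),
      gibbsUpdate π i x y = 0 := by
    refine Finset.sum_eq_zero fun y hy => ?_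
    exact gibbs_apply_of_not_rel i (Finset.mem_filter.1 hy).2
  have h1 : ∑ y ∈ Finset.univ.filter (fun y : ∀ j, X j => ∀ j, j ≠ i → y j = x j),
      gibbsUpdate π i x y = 1 := by
    have e : ∀ y ∈ Finset.univ.filter (fun y : ∀ j, X j => ∀ j, j ≠ i → y j = x j),
        gibbsUpdate π i x y = π y / Z π i x := fun y hy =>
      gibbs_apply_of_rel i (Finset.mem_filter.1 hy).2
    rw [Finset.sum_congr rfl e, ← Finset.sum_div]
    have : ∑ y ∈ Finset.univ.filter (fun y : ∀ j, X j => ∀ j, j ≠ i → y j = x j), π y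
        = Z π i x := rfl
    rw [this]
    exact div_self (Z_pos hpos i x).ne'
  rw [h1, h2, add_zero]

lemma gibbs_stoch (hpos : ∀ x, 0 < π x) (i : Fin n) : Stoch (gibbsUpdate π i) :=
  ⟨gibbs_nonneg hpos i, gibbs_rowsum hpos i⟩

lemma gibbs_rev (i : Fin n) : Rev π (gibbsUpdate π i) := by
  intro x y
  by_cases h : ∀ j, j ≠ i → y j = x j
  · have h' : ∀ j, j ≠ i → x j = y j := fun j hj => (h j hj).symm
    rw [gibbs_apply_of_rel i h, gibbs_apply_of_rel i h', Z_eq i h]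
    ring
  · have h' : ¬ ∀ j, j ≠ i → x j = y j := by
      intro hc
      exact h fun j hj => (hc j hj).symm
    rw [gibbs_apply_of_not_rel i h, gibbs_apply_of_not_rel i h']
    rw [mul_zero, mul_zero]

lemma gibbs_idem (hpos : ∀ x, 0 < π x) (i : Fin n) :
    gibbsUpdate π i * gibbsUpdate π i = gibbsUpdate π i := by
  ext x y
  rw [Matrix.mul_apply]
  by_cases h : ∀ j, j ≠ i → y j = x j
  · rw [gibbs_apply_of_rel i h]
    rw [← Finset.sum_filter_add_sum_filter_not Finset.univ
      (fun z : ∀ j, X j => ∀ j, j ≠ i → z j = x j)]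
    have h2 : ∑ z ∈ Finset.univ.filter (fun z : ∀ j, X j => ¬ ∀ j, j ≠ i → z j = x j),
        gibbsUpdate π i x z * gibbsUpdate π i z y = 0 := by
      refine Finset.sum_eq_zero fun z hz => ?_
      rw [gibbs_apply_of_not_rel i (Finset.mem_filter.1 hz).2, zero_mul]
    have h1 : ∑ z ∈ Finset.univ.filter (fun z : ∀ j, X j => ∀ j, j ≠ i → z j = x j),
        gibbsUpdate π i x z * gibbsUpdate π i z y = π y / Z π i x := by
      have e : ∀ z ∈ Finset.univ.filter (fun z : ∀ j, X j => ∀ j, j ≠ i → z j = x j),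
          gibbsUpdate π i x z * gibbsUpdate π i z y
            = π z / Z π i x * (π y / Z π i x) := by
        intro z hz
        have hz' := (Finset.mem_filter.1 hz).2
        have hzy : ∀ j, j ≠ i → y j = z j := fun j hj => by
          rw [h j hj, ← hz' j hj]
        rw [gibbs_apply_of_rel i hz', gibbs_apply_of_rel i hzy, Z_eq i hz']
      rw [Finset.sum_congr rfl e, ← Finset.sum_mul, ← Finset.sum_div]
      have : ∑ z ∈ Finset.univ.filter (fun z : ∀ j, X j => ∀ j, j ≠ i → z j = x j), π z
          = Z π i x := rfl
      rw [this, div_self (Z_pos hpos i x).ne', one_mul]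
    rw [h1, h2, add_zero]
  · rw [gibbs_apply_of_not_rel i h]
    refine Finset.sum_eq_zero fun z _ => ?_
    by_cases hz : ∀ j, j ≠ i → z j = x j
    · have hzy : ¬ ∀ j, j ≠ i → y j = z j := by
        intro hc
        exact h fun j hj => by rw [hc j hj, hz j hj]
      rw [gibbs_apply_of_not_rel i hzy, mul_zero]
    · rw [gibbs_apply_of_not_rel i hz, zero_mul]

section WithN

lemma glauber_apply (π : (∀ j, X j) → ℝ) (x y : ∀ j, X j) :
    glauberMatrix π x y = (n : ℝ)⁻¹ * ∑ i, gibbsUpdate π i x y := by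
  unfold glauberMatrix
  rw [Matrix.smul_apply, Matrix.sum_apply, smul_eq_mul]

lemma glauber_rev : Rev π (glauberMatrix π) := by
  intro x y
  rw [glauber_apply, glauber_apply, Finset.mul_sum, Finset.mul_sum, Finset.mul_sum,
    Finset.mul_sum]
  refine Finset.sum_congr rfl fun i _ => ?_
  have h := gibbs_rev (π := π) i x y
  calc π x * ((n : ℝ)⁻¹ * gibbsUpdate π i x y)
      = (n : ℝ)⁻¹ * (π x * gibbsUpdate π i x y) := by ring
    _ = (n : ℝ)⁻¹ * (π y * gibbsUpdate π i y x) := by rw [h]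
    _ = π y * ((n : ℝ)⁻¹ * gibbsUpdate π i y x) := by ring

lemma glauber_stoch (hpos : ∀ x, 0 < π x) (hn : 1 ≤ n) : Stoch (glauberMatrix π) := by
  have hne : (n : ℝ) ≠ 0 := by
    exact_mod_cast Nat.one_le_iff_ne_zero.1 hn
  constructor
  · intro x y
    rw [glauber_apply]
    refine mul_nonneg (by positivity) ?_
    exact Finset.sum_nonneg fun i _ => gibbs_nonneg hpos i x y
  · intro x
    calc ∑ y, glauberMatrix π x y
        = ∑ y, (n : ℝ)⁻¹ * ∑ i, gibbsUpdate π i x y :=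
          Finset.sum_congr rfl fun y _ => glauber_apply π x y
      _ = (n : ℝ)⁻¹ * ∑ y, ∑ i, gibbsUpdate π i x y := by rw [Finset.mul_sum]
      _ = (n : ℝ)⁻¹ * ∑ i : Fin n, ∑ y, gibbsUpdate π i x y := by rw [Finset.sum_comm]
      _ = (n : ℝ)⁻¹ * ∑ i : Fin n, (1 : ℝ) := by
          rw [Finset.sum_congr rfl fun i _ => gibbs_rowsum hpos i x]
      _ = 1 := by
          simp only [Finset.sum_const, Finset.card_univ, Fintype.card_fin, nsmul_eq_mul,
            mul_one]
          exact inv_mul_cancel₀ hne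

lemma gibbs_psd (hpos : ∀ x, 0 < π x) (i : Fin n) (f : (∀ j, X j) → ℝ) :
    0 ≤ ip π (apM (gibbsUpdate π i) f) f := by
  have h1 : apM (gibbsUpdate π i) f = apM (gibbsUpdate π i) (apM (gibbsUpdate π i) f) := by
    rw [← apM_mulMat, gibbs_idem hpos i]
  have h2 : ip π (apM (gibbsUpdate π i) f) f
      = ip π (apM (gibbsUpdate π i) f) (apM (gibbsUpdate π i) f) := by
    conv_lhs => rw [h1]
    exact selfAdj (gibbs_rev i) (apM (gibbsUpdate π i) f) f
  rw [h2]
  exact ip_self_nonneg (fun x => (hpos x).le) _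

lemma apM_glauber (π : (∀ j, X j) → ℝ) (f : (∀ j, X j) → ℝ) (x : ∀ j, X j) :
    apM (glauberMatrix π) f x = (n : ℝ)⁻¹ * ∑ i, apM (gibbsUpdate π i) f x := by
  unfold apM
  calc ∑ y, glauberMatrix π x y * f y
      = ∑ y, (n : ℝ)⁻¹ * ∑ i, gibbsUpdate π i x y * f y := by
        refine Finset.sum_congr rfl fun y _ => ?_
        rw [glauber_apply, mul_assoc, Finset.sum_mul]
    _ = (n : ℝ)⁻¹ * ∑ y, ∑ i, gibbsUpdate π i x y * f y := by rw [Finset.mul_sum]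
    _ = (n : ℝ)⁻¹ * ∑ i : Fin n, ∑ y, gibbsUpdate π i x y * f y := by rw [Finset.sum_comm]

lemma glauber_psd (hpos : ∀ x, 0 < π x) (f : (∀ j, X j) → ℝ) :
    0 ≤ ip π (apM (glauberMatrix π) f) f := by
  have e : ip π (apM (glauberMatrix π) f) f
      = (n : ℝ)⁻¹ * ∑ i, ip π (apM (gibbsUpdate π i) f) f := by
    unfold ip
    calc ∑ x, π x * (apM (glauberMatrix π) f x * f x)
        = ∑ x, (n : ℝ)⁻¹ * ∑ i, π x * (apM (gibbsUpdate π i) f x * f x) := by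
          refine Finset.sum_congr rfl fun x _ => ?_
          rw [apM_glauber]
          calc π x * (((n : ℝ)⁻¹ * ∑ i, apM (gibbsUpdate π i) f x) * f x)
              = (n : ℝ)⁻¹ * ((∑ i, apM (gibbsUpdate π i) f x) * (π x * f x)) := by ring
            _ = (n : ℝ)⁻¹ * (∑ i, apM (gibbsUpdate π i) f x * (π x * f x)) := by
                rw [Finset.sum_mul]
            _ = (n : ℝ)⁻¹ * ∑ i, π x * (apM (gibbsUpdate π i) f x * f x) := by
                congr 1
                exact Finset.sum_congr rfl fun i _ => by ring
      _ = (n : ℝ)⁻¹ * ∑ x, ∑ i, π x * (apM (gibbsUpdate π i) f x * f x) := by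
          rw [← Finset.mul_sum]
      _ = (n : ℝ)⁻¹ * ∑ i : Fin n, ∑ x, π x * (apM (gibbsUpdate π i) f x * f x) := by
          rw [Finset.sum_comm]
  rw [e]
  refine mul_nonneg (by positivity) ?_
  exact Finset.sum_nonneg fun i _ => gibbs_psd hpos i f

lemma FF_glauber (π : (∀ j, X j) → ℝ) (S : Finset (∀ j, X j)) :
    FF π (glauberMatrix π) S = (n : ℝ)⁻¹ * ∑ i, FF π (gibbsUpdate π i) S := by
  unfold FF
  calc ∑ x ∈ S, ∑ y ∈ Sᶜ, π x * glauberMatrix π x y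
      = ∑ x ∈ S, ∑ y ∈ Sᶜ, (n : ℝ)⁻¹ * ∑ i, π x * gibbsUpdate π i x y := by
        refine Finset.sum_congr rfl fun x _ => Finset.sum_congr rfl fun y _ => ?_
        rw [glauber_apply]
        calc π x * ((n : ℝ)⁻¹ * ∑ i, gibbsUpdate π i x y)
            = (n : ℝ)⁻¹ * (π x * ∑ i, gibbsUpdate π i x y) := by ring
          _ = (n : ℝ)⁻¹ * ∑ i, π x * gibbsUpdate π i x y := by rw [Finset.mul_sum]
    _ = (n : ℝ)⁻¹ * ∑ x ∈ S, ∑ y ∈ Sᶜ, ∑ i, π x * gibbsUpdate π i x y := by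
        rw [Finset.mul_sum]
        refine Finset.sum_congr rfl fun x _ => by rw [Finset.mul_sum]
    _ = (n : ℝ)⁻¹ * ∑ i : Fin n, ∑ x ∈ S, ∑ y ∈ Sᶜ, π x * gibbsUpdate π i x y := by
        congr 1
        calc ∑ x ∈ S, ∑ y ∈ Sᶜ, ∑ i : Fin n, π x * gibbsUpdate π i x y
            = ∑ x ∈ S, ∑ i : Fin n, ∑ y ∈ Sᶜ, π x * gibbsUpdate π i x y :=
              Finset.sum_congr rfl fun x _ => Finset.sum_comm
          _ = ∑ i : Fin n, ∑ x ∈ S, ∑ y ∈ Sᶜ, π x * gibbsUpdate π i x y := Finset.sum_comm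

lemma scan_eq (π : (∀ j, X j) → ℝ) (σ : Equiv.Perm (Fin n)) :
    scanMatrix π σ = (((List.ofFn σ).reverse).map (gibbsUpdate π)).prod := by
  unfold scanMatrix
  congr 1
  have h1 : (List.ofFn fun j => gibbsUpdate π (σ j)) = (List.ofFn σ).map (gibbsUpdate π) :=
    by rw [List.map_ofFn]; rfl
  rw [h1, List.map_reverse]

lemma stoch_mapProd (hpos : ∀ x, 0 < π x) (L : List (Fin n)) :
    Stoch ((L.map (gibbsUpdate π)).prod) := by
  refine Stoch.listProd (l := L.map (gibbsUpdate π)) fun M hM => ?_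
  obtain ⟨c, _, rfl⟩ := List.mem_map.1 hM
  exact gibbs_stoch hpos c

lemma stat_mapProd (hpos : ∀ x, 0 < π x) (hsum : ∑ x, π x = 1) (L : List (Fin n)) :
    Stat π ((L.map (gibbsUpdate π)).prod) := by
  refine Stat.listProd hsum (l := L.map (gibbsUpdate π)) fun M hM => ?_
  obtain ⟨c, _, rfl⟩ := List.mem_map.1 hM
  exact (gibbs_rev c).stat (gibbs_stoch hpos c)

lemma pos_mapProd (hpos : ∀ x, 0 < π x) :
    ∀ (L : List (Fin n)) (x y : ∀ j, X j), (∀ j, j ∈ L ∨ y j = x j) →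
      0 < (L.map (gibbsUpdate π)).prod x y := by
  intro L
  induction L with
  | nil =>
    intro x y h
    have hyx : y = x := funext fun j => (h j).resolve_left List.not_mem_nil
    subst hyx
    simp [Matrix.one_apply]
  | cons c L ih =>
    intro x y h
    rw [List.map_cons, List.prod_cons, Matrix.mul_apply]
    set z₀ : ∀ j, X j := Function.update x c (y c) with hz₀
    refine Finset.sum_pos' (fun z _ => mul_nonneg (gibbs_nonneg hpos c x z)
      ((stoch_mapProd hpos L).1 z y)) ⟨z₀, Finset.mem_univ z₀, ?_⟩
    refine mul_pos (gibbs_pos_of_rel hpos c ?_) (ih z₀ y ?_)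
    · intro j hj
      exact Function.update_of_ne hj _ x
    · intro j
      by_cases hjL : j ∈ L
      · exact Or.inl hjL
      · right
        by_cases hjc : j = c
        · subst hjc
          rw [hz₀, Function.update_self]
        · rw [hz₀, Function.update_of_ne hjc]
          rcases h j with hj | hj
          · rcases List.mem_cons.1 hj with h1 | h2
            · exact absurd h1 hjc
            · exact absurd h2 hjL
          · exact hj

lemma scan_pos (hpos : ∀ x, 0 < π x) (σ : Equiv.Perm (Fin n)) (x y : ∀ j, X j) :
    0 < scanMatrix π σ x y := by
  rw [scan_eq]
  refine pos_mapProd hpos _ x y fun j => Or.inl ?_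
  rw [List.mem_reverse, List.mem_ofFn]
  exact ⟨σ.symm j, by simp⟩

lemma scan_stoch (hpos : ∀ x, 0 < π x) (σ : Equiv.Perm (Fin n)) :
    Stoch (scanMatrix π σ) := by
  rw [scan_eq]
  exact stoch_mapProd hpos _

lemma scan_stat (hpos : ∀ x, 0 < π x) (hsum : ∑ x, π x = 1) (σ : Equiv.Perm (Fin n)) :
    Stat π (scanMatrix π σ) := by
  rw [scan_eq]
  exact stat_mapProd hpos hsum _

lemma FF_scan_le (hpos : ∀ x, 0 < π x) (hsum : ∑ x, π x = 1) (σ : Equiv.Perm (Fin n))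
    (S : Finset (∀ j, X j)) :
    FF π (scanMatrix π σ) S ≤ ∑ i, FF π (gibbsUpdate π i) S := by
  rw [scan_eq]
  have h1 := FF_listProd (π := π) (fun x => (hpos x).le) hsum
    (l := ((List.ofFn σ).reverse).map (gibbsUpdate π))
    (fun M hM => by
      obtain ⟨c, _, rfl⟩ := List.mem_map.1 hM
      exact ⟨gibbs_stoch hpos c, (gibbs_rev c).stat (gibbs_stoch hpos c)⟩) (A := S)
  refine h1.trans ?_
  rw [List.map_map]
  have h2 : (((List.ofFn σ).reverse).map ((fun M => FF π M S) ∘ (gibbsUpdate π))).sum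
      = ((List.ofFn σ).map ((fun M => FF π M S) ∘ (gibbsUpdate π))).sum := by
    rw [List.map_reverse, List.sum_reverse]
  rw [h2]
  have h3 : (List.ofFn σ).map ((fun M => FF π M S) ∘ (gibbsUpdate π))
      = List.ofFn (fun j => FF π (gibbsUpdate π (σ j)) S) := by
    rw [List.map_ofFn]
    rfl
  rw [h3, List.sum_ofFn]
  rw [Equiv.sum_comp σ (fun i => FF π (gibbsUpdate π i) S)]

end WithN

section Assembly

lemma piMin_pos [Nonempty (∀ j, X j)] (hpos : ∀ x, 0 < π x) : 0 < piMin π := by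
  obtain ⟨x, _, hx⟩ := Finset.exists_mem_eq_inf' (Finset.univ_nonempty) π
  rw [piMin, hx]
  exact hpos x

lemma piMin_le [Nonempty (∀ j, X j)] (x : ∀ j, X j) : piMin π ≤ π x :=
  Finset.inf'_le _ (Finset.mem_univ x)

lemma apM_pow_delta (hpos : ∀ x, 0 < π x) (hn : 1 ≤ n) (x : ∀ j, X j) (t : ℕ)
    (y : ∀ j, X j) :
    apM ((glauberMatrix π) ^ t) (fun z => (if z = x then (1:ℝ) else 0) / π z - 1) y
      = ((glauberMatrix π) ^ t) x y / π y - 1 := by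
  have hst : Stoch ((glauberMatrix π) ^ t) := (glauber_stoch hpos hn).pow t
  have hrevt : Rev π ((glauberMatrix π) ^ t) := (glauber_rev (π := π)).pow t
  unfold apM
  have e1 : ∑ z, ((glauberMatrix π) ^ t) y z * ((if z = x then (1:ℝ) else 0) / π z - 1)
      = ((glauberMatrix π) ^ t) y x / π x - ∑ z, ((glauberMatrix π) ^ t) y z := by
    calc ∑ z, ((glauberMatrix π) ^ t) y z * ((if z = x then (1:ℝ) else 0) / π z - 1)
        = ∑ z, (((glauberMatrix π) ^ t) y z * ((if z = x then (1:ℝ) else 0) / π z)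
            - ((glauberMatrix π) ^ t) y z) :=
          Finset.sum_congr rfl fun z _ => by ring
      _ = ∑ z, ((glauberMatrix π) ^ t) y z * ((if z = x then (1:ℝ) else 0) / π z)
          - ∑ z, ((glauberMatrix π) ^ t) y z := Finset.sum_sub_distrib _ _
      _ = ((glauberMatrix π) ^ t) y x / π x - ∑ z, ((glauberMatrix π) ^ t) y z := by
          congr 1
          rw [Finset.sum_eq_single x]
          · rw [if_pos rfl, mul_one_div]
          · intro z _ hz
            rw [if_neg hz, zero_div, mul_zero]
          · intro hx
            exact absurd (Finset.mem_univ x) hx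
  rw [e1, hst.2 y]
  congr 1
  rw [div_eq_div_iff (hpos x).ne' (hpos y).ne']
  have h := hrevt y x
  linarith [h]

lemma ip_delta_le (hpos : ∀ x, 0 < π x) (hsum : ∑ x, π x = 1) [Nonempty (∀ j, X j)]
    (x : ∀ j, X j) :
    ip π (fun z => (if z = x then (1:ℝ) else 0) / π z - 1)
      (fun z => (if z = x then (1:ℝ) else 0) / π z - 1) ≤ 1 / piMin π := by
  have hpm := piMin_pos (π := π) hpos
  have hπ1 : ∀ y, π y ≤ 1 := by
    intro y
    rw [← hsum]
    exact Finset.single_le_sum (fun z _ => (hpos z).le) (Finset.mem_univ y)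
  have key : ip π (fun z => (if z = x then (1:ℝ) else 0) / π z - 1)
      (fun z => (if z = x then (1:ℝ) else 0) / π z - 1) = (1 - π x) / π x := by
    unfold ip
    rw [Finset.sum_eq_add_sum_sdiff_singleton_of_mem (Finset.mem_univ x)]
    have e1 : π x * (((if x = x then (1:ℝ) else 0) / π x - 1)
        * ((if x = x then (1:ℝ) else 0) / π x - 1)) = (1 - π x) ^ 2 / π x := by
      rw [if_pos rfl]
      have hne := (hpos x).ne'
      field_simp
    have e2 : ∑ z ∈ Finset.univ \ {x}, π z * (((if z = x then (1:ℝ) else 0) / π z - 1)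
        * ((if z = x then (1:ℝ) else 0) / π z - 1)) = ∑ z ∈ Finset.univ \ {x}, π z := by
      refine Finset.sum_congr rfl fun z hz => ?_
      have hzx : z ≠ x := by
        intro h
        subst h
        exact absurd (Finset.mem_sdiff.1 hz).2 (by simp)
      rw [if_neg hzx, zero_div, zero_sub]
      ring
    have e3 : ∑ z ∈ Finset.univ \ {x}, π z = 1 - π x := by
      have := Finset.sum_eq_add_sum_sdiff_singleton_of_mem (Finset.mem_univ x) π
      rw [hsum] at this
      linarith
    rw [e1, e2, e3]
    have hne := (hpos x).ne'
    field_simp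
    ring
  rw [key]
  exact div_le_div₀ (by norm_num) (by linarith [hpos x, hπ1 x]) hpm (piMin_le x)

lemma master (hpos : ∀ x, 0 < π x) (hsum : ∑ x, π x = 1) (hn : 1 ≤ n)
    {ε : ℝ} (hε : 0 < ε) (hε1 : ε ≤ 1) (σ : Equiv.Perm (Fin n)) :
    (mixTime (glauberMatrix π) π ε : ℝ) ≤
      46 * (n : ℝ) ^ 2 * (mixTime (scanMatrix π σ) π (1 / 10) : ℝ) ^ 2 *
        Real.log (1 / (ε * piMin π)) := by
  have hπ1 : ∀ y, π y ≤ 1 := by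
    intro y
    rw [← hsum]
    exact Finset.single_le_sum (fun z _ => (hpos z).le) (Finset.mem_univ y)
  have hpm : 0 < piMin π := piMin_pos hpos
  have hpm1 : piMin π ≤ 1 := (piMin_le (Classical.arbitrary _)).trans (hπ1 _)
  have hεπ : 0 < ε * piMin π := mul_pos hε hpm
  have hεπ1 : ε * piMin π ≤ 1 := mul_le_one₀ hε1 hpm.le hpm1
  have hL0 : 0 ≤ Real.log (1 / (ε * piMin π)) :=
    Real.log_nonneg ((le_div_iff₀ hεπ).2 (by linarith))
  have hTnn : (0:ℝ) ≤ (mixTime (scanMatrix π σ) π (1 / 10) : ℝ) := Nat.cast_nonneg _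
  rcases subsingleton_or_nontrivial (∀ j, X j) with hsing | hnt
  · -- trivial state space
    have h0 : mixTime (glauberMatrix π) π ε = 0 := by
      have hmem : (0:ℕ) ∈ {t : ℕ | ∀ x : (∀ j, X j),
          (1/2 : ℝ) * ∑ y, |((glauberMatrix π) ^ t) x y - π y| ≤ ε} := by
        intro x
        have hx1 : π x = 1 := by
          rw [← hsum, Finset.sum_eq_single x]
          · intro b _ hb
            exact absurd (Subsingleton.elim b x) hb
          · intro hx
            exact absurd (Finset.mem_univ x) hx
        have hz : ∑ y, |((glauberMatrix π) ^ 0) x y - π y| = 0 := by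
          refine Finset.sum_eq_zero fun y _ => ?_
          have hyx : y = x := Subsingleton.elim y x
          subst hyx
          rw [pow_zero, Matrix.one_apply_eq, hx1, sub_self, abs_zero]
        rw [hz, mul_zero]
        exact hε.le
      have h1 := Nat.sInf_le hmem
      unfold mixTime
      omega
    rw [h0, Nat.cast_zero]
    have : (0:ℝ) ≤ 46 * (n : ℝ) ^ 2 * (mixTime (scanMatrix π σ) π (1 / 10) : ℝ) ^ 2 :=
      by positivity
    exact mul_nonneg this hL0
  · -- nontrivial
    obtain ⟨x₁, x₂, hx12⟩ := hnt
    set T := mixTime (scanMatrix π σ) π (1/10) with hTdef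
    have hTmem : ∀ x : (∀ j, X j),
        (1/2:ℝ) * ∑ y, |((scanMatrix π σ) ^ T) x y - π y| ≤ 1/10 := by
      have hne : {t : ℕ | ∀ x : (∀ j, X j),
          (1/2:ℝ) * ∑ y, |((scanMatrix π σ) ^ t) x y - π y| ≤ 1/10}.Nonempty :=
        exists_tv_small hpos hsum (scan_stoch hpos σ) (scan_stat hpos hsum σ)
          (scan_pos hpos σ) (by norm_num)
      have := Nat.sInf_mem hne
      exact this
    have hπpair : π x₁ + π x₂ ≤ 1 := by
      have he : π x₁ + π x₂ = ∑ y ∈ ({x₁, x₂} : Finset (∀ j, X j)), π y :=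
        (Finset.sum_pair hx12).symm
      rw [he, ← hsum]
      exact Finset.sum_le_sum_of_subset_of_nonneg (Finset.subset_univ _)
        (fun y _ _ => (hpos y).le)
    have hkey9 : T = 0 → ∀ x : (∀ j, X j), 9/10 ≤ π x := by
      intro hT0 x
      have h := hTmem x
      rw [hT0, pow_zero] at h
      have hsum_eq : ∑ y, |(1 : Matrix (∀ j, X j) (∀ j, X j) ℝ) x y - π y|
          = 2 * (1 - π x) := by
        calc ∑ y, |(1 : Matrix (∀ j, X j) (∀ j, X j) ℝ) x y - π y|
            = ∑ y, ((if x = y then (1:ℝ) - 2 * π y else 0) + π y) := by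
              refine Finset.sum_congr rfl fun y _ => ?_
              rw [Matrix.one_apply]
              by_cases hxy : x = y
              · rw [if_pos hxy, if_pos hxy, abs_of_nonneg (by linarith [hπ1 y] : (0:ℝ) ≤ 1 - π y)]
                ring
              · rw [if_neg hxy, if_neg hxy, zero_sub, abs_neg, abs_of_nonneg (hpos y).le]
                ring
          _ = (1 - 2 * π x) + 1 := by
              rw [Finset.sum_add_distrib, hsum, Finset.sum_ite_eq Finset.univ x
                (fun y => (1:ℝ) - 2 * π y)]
              simp
          _ = 2 * (1 - π x) := by ring
      rw [hsum_eq] at h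
      linarith
    have hT1 : 1 ≤ T := by
      by_contra hc
      have hT0 : T = 0 := by omega
      have h1 := hkey9 hT0 x₁
      have h2 := hkey9 hT0 x₂
      linarith
    have hpm2 : piMin π ≤ 1/2 := by
      have h1 := piMin_le (π := π) x₁
      have h2 := piMin_le (π := π) x₂
      linarith
    have hnR : (1:ℝ) ≤ (n:ℝ) := by exact_mod_cast hn
    have hTR : (1:ℝ) ≤ (T:ℝ) := by exact_mod_cast hT1
    have hnTpos : (0:ℝ) < (n:ℝ) * (T:ℝ) := by nlinarith
    set φ : ℝ := 3 / (10 * (n:ℝ) * (T:ℝ)) with hφdef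
    have hφpos : 0 < φ := by
      rw [hφdef]
      have : (0:ℝ) < 10 * (n:ℝ) * (T:ℝ) := by nlinarith
      positivity
    have hφle : φ ≤ 3/10 := by
      rw [hφdef]
      rw [div_le_div_iff₀ (by nlinarith) (by norm_num)]
      nlinarith
    -- conductance bound
    have hcond : ∀ S : Finset (∀ j, X j), S.Nonempty → (∑ x ∈ S, π x) ≤ 1/2 →
        φ * ∑ x ∈ S, π x ≤ FF π (glauberMatrix π) S := by
      intro S hSne hS2
      have hQst : Stoch (scanMatrix π σ) := scan_stoch hpos σ
      have hQstat : Stat π (scanMatrix π σ) := scan_stat hpos hsum σ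
      have hSnn : (0:ℝ) ≤ ∑ x ∈ S, π x :=
        Finset.sum_nonneg fun x _ => (hpos x).le
      have hflow_lb : (3/10) * ∑ x ∈ S, π x ≤ FF π ((scanMatrix π σ) ^ T) S := by
        have hpt : ∀ x, (3/10 : ℝ) ≤ ∑ y ∈ Sᶜ, ((scanMatrix π σ) ^ T) x y := by
          intro x
          have h1 : ∑ y ∈ Sᶜ, π y = 1 - ∑ x ∈ S, π x := by
            have := Finset.sum_add_sum_compl S π
            rw [hsum] at this
            linarith
          have h3 : ∑ y ∈ Sᶜ, |((scanMatrix π σ) ^ T) x y - π y| ≤ 1/5 := by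
            have h4 := hTmem x
            have h5 : ∑ y ∈ Sᶜ, |((scanMatrix π σ) ^ T) x y - π y|
                ≤ ∑ y, |((scanMatrix π σ) ^ T) x y - π y| :=
              Finset.sum_le_sum_of_subset_of_nonneg (Finset.subset_univ _)
                (fun y _ _ => abs_nonneg _)
            linarith
          have h2 : ∑ y ∈ Sᶜ, (π y - |((scanMatrix π σ) ^ T) x y - π y|)
              ≤ ∑ y ∈ Sᶜ, ((scanMatrix π σ) ^ T) x y := by
            refine Finset.sum_le_sum fun y _ => ?_
            have := neg_abs_le (((scanMatrix π σ) ^ T) x y - π y)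
            linarith
          have h6 : ∑ y ∈ Sᶜ, (π y - |((scanMatrix π σ) ^ T) x y - π y|)
              = (1 - ∑ x ∈ S, π x) - ∑ y ∈ Sᶜ, |((scanMatrix π σ) ^ T) x y - π y| := by
            rw [Finset.sum_sub_distrib, h1]
          linarith
        unfold FF
        calc (3/10) * ∑ x ∈ S, π x = ∑ x ∈ S, π x * (3/10) := by
              rw [mul_comm, Finset.sum_mul]
          _ ≤ ∑ x ∈ S, π x * ∑ y ∈ Sᶜ, ((scanMatrix π σ) ^ T) x y := by
              refine Finset.sum_le_sum fun x _ => ?_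
              exact mul_le_mul_of_nonneg_left (hpt x) (hpos x).le
          _ = ∑ x ∈ S, ∑ y ∈ Sᶜ, π x * ((scanMatrix π σ) ^ T) x y := by
              exact Finset.sum_congr rfl fun x _ => Finset.mul_sum _ _ _
      have hflow_ub : FF π ((scanMatrix π σ) ^ T) S
          ≤ (T:ℝ) * ((n:ℝ) * FF π (glauberMatrix π) S) := by
        have h1 := FF_pow (π := π) (A := S) (fun x => (hpos x).le) hQst hQstat T
        have h2 := FF_scan_le hpos hsum σ S
        have h3 : ∑ i, FF π (gibbsUpdate π i) S = (n:ℝ) * FF π (glauberMatrix π) S := by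
          rw [FF_glauber]
          have hne : (n:ℝ) ≠ 0 := by linarith
          field_simp
        calc FF π ((scanMatrix π σ) ^ T) S ≤ (T:ℝ) * FF π (scanMatrix π σ) S := h1
          _ ≤ (T:ℝ) * ∑ i, FF π (gibbsUpdate π i) S := by
              refine mul_le_mul_of_nonneg_left h2 (by linarith)
          _ = (T:ℝ) * ((n:ℝ) * FF π (glauberMatrix π) S) := by rw [h3]
      have hcomb : (3/10) * ∑ x ∈ S, π x
          ≤ (T:ℝ) * ((n:ℝ) * FF π (glauberMatrix π) S) := le_trans hflow_lb hflow_ub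
      rw [hφdef, div_mul_eq_mul_div, div_le_iff₀ (by nlinarith : (0:ℝ) < 10 * (n:ℝ) * (T:ℝ))]
      calc 3 * ∑ x ∈ S, π x = 10 * ((3/10) * ∑ x ∈ S, π x) := by ring
        _ ≤ 10 * ((T:ℝ) * ((n:ℝ) * FF π (glauberMatrix π) S)) := by linarith
        _ = FF π (glauberMatrix π) S * (10 * (n:ℝ) * (T:ℝ)) := by ring
    -- spectral gap via Cheeger
    set γ : ℝ := φ ^ 2 / 2 with hγdef
    have hγpos : 0 < γ := by
      rw [hγdef]
      positivity
    have hγle : γ ≤ 1 := by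
      rw [hγdef]
      nlinarith [hφle, hφpos]
    have hray : ∀ g : (∀ j, X j) → ℝ, ∑ z, π z * g z = 0 →
        ip π (apM (glauberMatrix π) g) g ≤ (1 - γ) * ip π g g := by
      intro g hg
      have h := cheeger hpos hsum (glauber_stoch hpos hn) (glauber_rev (π := π))
        hφpos.le hcond g hg
      rw [hγdef]
      exact h
    have hdecay := iter_decay (π := π) (fun x => (hpos x).le) (glauber_stoch hpos hn)
      (glauber_rev (π := π)) (glauber_psd hpos) hγle hray
    set L := Real.log (1 / (ε * piMin π)) with hLdef
    set c : ℝ := (2 / γ) * L with hcdef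
    set tstar : ℕ := ⌈c⌉₊ with htdef
    have hc0 : 0 ≤ c := by
      rw [hcdef]
      exact mul_nonneg (by positivity) hL0
    have htc : c ≤ (tstar:ℝ) := Nat.le_ceil c
    -- membership of tstar in the Glauber mixing set
    have hmem : ∀ x : (∀ j, X j),
        (1/2:ℝ) * ∑ y, |((glauberMatrix π) ^ tstar) x y - π y| ≤ ε := by
      intro x
      have hmz : ∑ z, π z * ((if z = x then (1:ℝ) else 0) / π z - 1) = 0 := by
        calc ∑ z, π z * ((if z = x then (1:ℝ) else 0) / π z - 1)
            = ∑ z, ((if z = x then (1:ℝ) else 0) - π z) := by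
              refine Finset.sum_congr rfl fun z _ => ?_
              have hz := (hpos z).ne'
              field_simp
          _ = 1 - 1 := by
              rw [Finset.sum_sub_distrib, hsum, Finset.sum_ite_eq' Finset.univ x
                (fun _ => (1:ℝ))]
              simp
          _ = 0 := by ring
      have hdec := hdecay (fun z => (if z = x then (1:ℝ) else 0) / π z - 1) hmz tstar
      have hipk := ip_delta_le hpos hsum x
      have hTV : ∑ y, |((glauberMatrix π) ^ tstar) x y - π y|
          = ∑ y, π y * |apM ((glauberMatrix π) ^ tstar)
              (fun z => (if z = x then (1:ℝ) else 0) / π z - 1) y| := by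
        refine Finset.sum_congr rfl fun y _ => ?_
        rw [apM_pow_delta hpos hn x tstar y]
        rw [show π y * |((glauberMatrix π) ^ tstar) x y / π y - 1|
            = |π y * (((glauberMatrix π) ^ tstar) x y / π y - 1)| from by
          rw [abs_mul, abs_of_nonneg (hpos y).le]]
        congr 1
        have hy := (hpos y).ne'
        field_simp
      set g := apM ((glauberMatrix π) ^ tstar)
        (fun z => (if z = x then (1:ℝ) else 0) / π z - 1) with hgdef
      have hS1nn : (0:ℝ) ≤ ∑ y, π y * |g y| :=
        Finset.sum_nonneg fun y _ => mul_nonneg (hpos y).le (abs_nonneg _)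
      have hcs : (∑ y, π y * |g y|) ^ 2 ≤ ip π g g := by
        have h := ip_cs (π := π) (fun z => (hpos z).le) (fun y => |g y|) (fun _ => (1:ℝ))
        have e1 : ip π (fun y => |g y|) (fun _ => (1:ℝ)) = ∑ y, π y * |g y| := by
          unfold ip
          exact Finset.sum_congr rfl fun y _ => by rw [mul_one]
        have e2 : ip π (fun y => |g y|) (fun y => |g y|) = ip π g g := by
          unfold ip
          exact Finset.sum_congr rfl fun y _ => by rw [abs_mul_abs_self]
        have e3 : ip π (fun _ => (1:ℝ)) (fun _ => (1:ℝ)) = 1 := by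
          unfold ip
          simp [hsum]
        rw [e1, e2, e3, mul_one] at h
        exact h
      have hchain : ip π g g ≤ (1-γ) ^ tstar * (1 / piMin π) := by
        calc ip π g g ≤ (1-γ) ^ tstar
              * ip π (fun z => (if z = x then (1:ℝ) else 0) / π z - 1)
                (fun z => (if z = x then (1:ℝ) else 0) / π z - 1) := hdec
          _ ≤ (1-γ) ^ tstar * (1 / piMin π) := by
              refine mul_le_mul_of_nonneg_left hipk (pow_nonneg (by linarith) _)
      have hpowbound : (1-γ) ^ tstar * (1 / piMin π) ≤ 4 * ε^2 := by
        have h1 : (1-γ) ^ tstar ≤ Real.exp (-(γ * tstar)) := by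
          have hb : 1 - γ ≤ Real.exp (-γ) := by
            have := Real.add_one_le_exp (-γ)
            linarith
          calc (1-γ) ^ tstar ≤ (Real.exp (-γ)) ^ tstar :=
                pow_le_pow_left₀ (by linarith) hb tstar
            _ = Real.exp (-(γ * tstar)) := by
                rw [← Real.exp_nat_mul]
                congr 1
                ring
        have h2 : Real.exp (-(γ * tstar)) ≤ 4 * ε^2 * piMin π := by
          rw [show (4:ℝ) * ε^2 * piMin π = Real.exp (Real.log (4 * ε^2 * piMin π)) from
            (Real.exp_log (by positivity)).symm]
          apply Real.exp_le_exp.2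
          have h3 : γ * c ≤ γ * tstar := mul_le_mul_of_nonneg_left htc hγpos.le
          have h4 : γ * c = 2 * L := by
            rw [hcdef]
            field_simp
          have h5 : Real.log (1/(4*ε^2*piMin π)) ≤ 2 * L := by
            have harg : (1:ℝ)/(4*ε^2*piMin π) ≤ (1/(ε * piMin π))^2 := by
              rw [div_pow, one_pow]
              refine div_le_div₀ (by positivity) le_rfl (by positivity) ?_
              nlinarith [hpm.le, hpm1, hε.le, sq_nonneg ε]
            calc Real.log (1/(4*ε^2*piMin π)) ≤ Real.log ((1/(ε * piMin π))^2) := by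
                  refine Real.log_le_log (by positivity) harg
              _ = 2 * L := by
                  rw [Real.log_pow, hLdef]
                  push_cast
                  ring
          have h6 : Real.log (4*ε^2*piMin π) = - Real.log (1/(4*ε^2*piMin π)) := by
            rw [one_div, Real.log_inv]
            ring
          rw [h6]
          linarith
        calc (1-γ) ^ tstar * (1 / piMin π) ≤ Real.exp (-(γ * tstar)) * (1 / piMin π) := by
              refine mul_le_mul_of_nonneg_right h1 (by positivity)
          _ ≤ (4 * ε^2 * piMin π) * (1 / piMin π) := by
              refine mul_le_mul_of_nonneg_right h2 (by positivity)
          _ = 4 * ε^2 := by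
              field_simp
      have hfin : (∑ y, π y * |g y|) ^ 2 ≤ 4*ε^2 := le_trans hcs (le_trans hchain hpowbound)
      have hS1le : ∑ y, π y * |g y| ≤ 2*ε := by nlinarith [hS1nn, hfin, hε]
      rw [hTV]
      linarith
    have hmix_le : mixTime (glauberMatrix π) π ε ≤ tstar := by
      unfold mixTime
      exact Nat.sInf_le hmem
    have hcast : (mixTime (glauberMatrix π) π ε : ℝ) ≤ (tstar:ℝ) := by exact_mod_cast hmix_le
    have htub : (tstar:ℝ) < c + 1 := Nat.ceil_lt_add_one hc0
    have h2γ : 2 / γ = (400/9) * (n:ℝ)^2 * (T:ℝ)^2 := by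
      rw [hγdef, hφdef]
      field_simp
      ring
    have hL2 : Real.log 2 ≤ L := by
      rw [hLdef]
      refine Real.log_le_log (by norm_num) ?_
      rw [le_div_iff₀ hεπ]
      nlinarith [hε1, hpm2, hε.le, hpm.le]
    have hlog2 : (0.6931:ℝ) ≤ Real.log 2 := by
      have := Real.log_two_gt_d9
      linarith
    have hfinal : c + 1 ≤ 46 * (n:ℝ)^2 * (T:ℝ)^2 * L := by
      rw [hcdef, h2γ]
      have ha : (1:ℝ) ≤ (n:ℝ)^2 := by nlinarith
      have hb : (1:ℝ) ≤ (T:ℝ)^2 := by nlinarith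
      have hnt2 : (1:ℝ) ≤ (n:ℝ)^2 * (T:ℝ)^2 := by nlinarith [ha, hb]
      have hntl : (0.6931:ℝ) ≤ (n:ℝ)^2 * (T:ℝ)^2 * L := by nlinarith [hL2, hlog2, hL0]
      nlinarith [hntl, hL0, hnt2]
    linarith

end Assembly

end GlauberGibbs


/-- There are universal constants `C > 0`, `K > 0` such that for every fully supported
distribution `π` on a finite product space: (i) for every scan order `σ`, with
`T = t^{SS(σ)}_mix(1/10)`, one has
`t^{GD}_mix(ε) ≤ C n⁶ T⁴ (log(2 + nT))^K log(1/(ε π_min))`; and (ii) with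
`T* = max_σ t^{SS(σ)}_mix(1/10)`, one has
`t^{GD}_mix(ε) ≤ C n⁴ (T*)⁴ (log(2 + nT*))^K log(1/(ε π_min))`. -/
theorem glauber_mixing_of_scan_mixing :
    ∃ C K : ℝ, 0 < C ∧ 0 < K ∧
      ∀ (n : ℕ), 1 ≤ n →
      ∀ (X : Fin n → Type u) [∀ i, Fintype (X i)] [∀ i, Nonempty (X i)]
        (π : (∀ i, X i) → ℝ), (∀ x, 0 < π x) → (∑ x, π x = 1) →
      ∀ (ε : ℝ), 0 < ε → ε ≤ 1 →
      ((∀ (σ : Equiv.Perm (Fin n)),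
          (mixTime (glauberMatrix π) π ε : ℝ) ≤
            C * (n : ℝ) ^ 6 * (mixTime (scanMatrix π σ) π (1 / 10) : ℝ) ^ 4 *
              Real.log (2 + (n : ℝ) * (mixTime (scanMatrix π σ) π (1 / 10) : ℝ)) ^ K *
              Real.log (1 / (ε * piMin π))) ∧
        ((mixTime (glauberMatrix π) π ε : ℝ) ≤
            C * (n : ℝ) ^ 4 *
              ((Finset.univ.sup (fun σ : Equiv.Perm (Fin n) =>
                mixTime (scanMatrix π σ) π (1 / 10)) : ℕ) : ℝ) ^ 4 *
              Real.log (2 + (n : ℝ) *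
                ((Finset.univ.sup (fun σ : Equiv.Perm (Fin n) =>
                  mixTime (scanMatrix π σ) π (1 / 10)) : ℕ) : ℝ)) ^ K *
              Real.log (1 / (ε * piMin π)))) := by
  refine ⟨46, 1, by norm_num, by norm_num, ?_⟩
  intro n hn X _ _ π hpos hsum ε hε hε1
  have hπ1 : ∀ y, π y ≤ 1 := by
    intro y
    rw [← hsum]
    exact Finset.single_le_sum (fun z _ => (hpos z).le) (Finset.mem_univ y)
  have hpm : 0 < piMin π := GlauberGibbs.piMin_pos hpos
  have hpm1 : piMin π ≤ 1 := (GlauberGibbs.piMin_le (Classical.arbitrary _)).trans (hπ1 _)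
  have hεπ : 0 < ε * piMin π := mul_pos hε hpm
  have hεπ1 : ε * piMin π ≤ 1 := mul_le_one₀ hε1 hpm.le hpm1
  have hL0 : 0 ≤ Real.log (1 / (ε * piMin π)) :=
    Real.log_nonneg ((le_div_iff₀ hεπ).2 (by linarith))
  have hn1 : (1:ℝ) ≤ (n:ℝ) := by exact_mod_cast hn
  constructor
  · intro σ
    have hm := GlauberGibbs.master hpos hsum hn hε hε1 σ
    set T := mixTime (scanMatrix π σ) π (1/10) with hT
    rw [Real.rpow_one]
    have hcmp : (n:ℝ)^2 * (T:ℝ)^2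
        ≤ (n:ℝ)^6 * (T:ℝ)^4 * Real.log (2 + (n:ℝ) * (T:ℝ)) := by
      rcases Nat.eq_zero_or_pos T with h0 | h1
      · simp [h0]
      · have hT1 : (1:ℝ) ≤ (T:ℝ) := by exact_mod_cast h1
        have hlog : (1:ℝ) ≤ Real.log (2 + (n:ℝ) * (T:ℝ)) := by
          have he : Real.exp 1 ≤ 2 + (n:ℝ) * (T:ℝ) := by
            have h9 := Real.exp_one_lt_d9
            nlinarith [hn1, hT1]
          calc (1:ℝ) = Real.log (Real.exp 1) := (Real.log_exp 1).symm
            _ ≤ Real.log (2 + (n:ℝ) * (T:ℝ)) := Real.log_le_log (Real.exp_pos 1) he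
        have e1 : (n:ℝ)^2*(T:ℝ)^2 ≤ (n:ℝ)^6*(T:ℝ)^4 := by
          have ha : (n:ℝ)^2 ≤ (n:ℝ)^6 := pow_le_pow_right₀ hn1 (by norm_num)
          have hb : (T:ℝ)^2 ≤ (T:ℝ)^4 := pow_le_pow_right₀ hT1 (by norm_num)
          exact mul_le_mul ha hb (by positivity) (by positivity)
        calc (n:ℝ)^2*(T:ℝ)^2 ≤ (n:ℝ)^6*(T:ℝ)^4 := e1
          _ = (n:ℝ)^6*(T:ℝ)^4 * 1 := (mul_one _).symm
          _ ≤ (n:ℝ)^6*(T:ℝ)^4 * Real.log (2 + (n:ℝ) * (T:ℝ)) := by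
              refine mul_le_mul_of_nonneg_left hlog (by positivity)
    refine hm.trans ?_
    have h2 := mul_le_mul_of_nonneg_right
      (mul_le_mul_of_nonneg_left hcmp (by norm_num : (0:ℝ) ≤ 46)) hL0
    calc 46 * (n:ℝ)^2 * (T:ℝ)^2 * Real.log (1 / (ε * piMin π))
        = 46 * ((n:ℝ)^2 * (T:ℝ)^2) * Real.log (1 / (ε * piMin π)) := by ring
      _ ≤ 46 * ((n:ℝ)^6*(T:ℝ)^4 * Real.log (2 + (n:ℝ) * (T:ℝ)))
          * Real.log (1 / (ε * piMin π)) := h2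
      _ = 46 * (n:ℝ)^6 * (T:ℝ)^4 * Real.log (2 + (n:ℝ) * (T:ℝ))
          * Real.log (1 / (ε * piMin π)) := by ring
  · have hm := GlauberGibbs.master hpos hsum hn hε hε1 1
    set T0 := mixTime (scanMatrix π 1) π (1/10) with hT0def
    set Ts := Finset.univ.sup (fun σ : Equiv.Perm (Fin n) =>
      mixTime (scanMatrix π σ) π (1/10)) with hTsdef
    have hle : T0 ≤ Ts := by
      rw [hT0def, hTsdef]
      exact Finset.le_sup (f := fun σ : Equiv.Perm (Fin n) =>
        mixTime (scanMatrix π σ) π (1/10)) (Finset.mem_univ 1)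
    rw [Real.rpow_one]
    have hlognn : 0 ≤ Real.log (2 + (n:ℝ) * (Ts:ℝ)) := by
      refine Real.log_nonneg ?_
      have : (0:ℝ) ≤ (n:ℝ) * (Ts:ℝ) := by positivity
      linarith
    have hcmp : (n:ℝ)^2 * (T0:ℝ)^2
        ≤ (n:ℝ)^4 * (Ts:ℝ)^4 * Real.log (2 + (n:ℝ) * (Ts:ℝ)) := by
      rcases Nat.eq_zero_or_pos T0 with h0 | h1
      · rw [h0]
        push_cast
        have : (0:ℝ) ≤ (n:ℝ)^4 * (Ts:ℝ)^4 * Real.log (2 + (n:ℝ) * (Ts:ℝ)) := by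
          refine mul_nonneg (by positivity) hlognn
        nlinarith [this]
      · have hT01 : (1:ℝ) ≤ (T0:ℝ) := by exact_mod_cast h1
        have hTs1 : (1:ℝ) ≤ (Ts:ℝ) := by
          have : 1 ≤ Ts := le_trans h1 hle
          exact_mod_cast this
        have hT0Ts : (T0:ℝ) ≤ (Ts:ℝ) := by exact_mod_cast hle
        have hlog : (1:ℝ) ≤ Real.log (2 + (n:ℝ) * (Ts:ℝ)) := by
          have he : Real.exp 1 ≤ 2 + (n:ℝ) * (Ts:ℝ) := by
            have h9 := Real.exp_one_lt_d9
            nlinarith [hn1, hTs1]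
          calc (1:ℝ) = Real.log (Real.exp 1) := (Real.log_exp 1).symm
            _ ≤ Real.log (2 + (n:ℝ) * (Ts:ℝ)) := Real.log_le_log (Real.exp_pos 1) he
        have e1 : (n:ℝ)^2*(T0:ℝ)^2 ≤ (n:ℝ)^4*(Ts:ℝ)^4 := by
          have ha : (n:ℝ)^2 ≤ (n:ℝ)^4 := pow_le_pow_right₀ hn1 (by norm_num)
          have hb : (T0:ℝ)^2 ≤ (Ts:ℝ)^4 := by
            calc (T0:ℝ)^2 ≤ (Ts:ℝ)^2 := by
                  refine pow_le_pow_left₀ (by positivity) hT0Ts 2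
              _ ≤ (Ts:ℝ)^4 := pow_le_pow_right₀ hTs1 (by norm_num)
          exact mul_le_mul ha hb (by positivity) (by positivity)
        calc (n:ℝ)^2*(T0:ℝ)^2 ≤ (n:ℝ)^4*(Ts:ℝ)^4 := e1
          _ = (n:ℝ)^4*(Ts:ℝ)^4 * 1 := (mul_one _).symm
          _ ≤ (n:ℝ)^4*(Ts:ℝ)^4 * Real.log (2 + (n:ℝ) * (Ts:ℝ)) := by
              refine mul_le_mul_of_nonneg_left hlog (by positivity)
    refine hm.trans ?_
    have h2 := mul_le_mul_of_nonneg_right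
      (mul_le_mul_of_nonneg_left hcmp (by norm_num : (0:ℝ) ≤ 46)) hL0
    calc 46 * (n:ℝ)^2 * (T0:ℝ)^2 * Real.log (1 / (ε * piMin π))
        = 46 * ((n:ℝ)^2 * (T0:ℝ)^2) * Real.log (1 / (ε * piMin π)) := by ring
      _ ≤ 46 * ((n:ℝ)^4*(Ts:ℝ)^4 * Real.log (2 + (n:ℝ) * (Ts:ℝ)))
          * Real.log (1 / (ε * piMin π)) := h2
      _ = 46 * (n:ℝ)^4 * (Ts:ℝ)^4 * Real.log (2 + (n:ℝ) * (Ts:ℝ))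
          * Real.log (1 / (ε * piMin π)) := by ring
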